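/- arXiv:1807.00730 — 6 statements merged into one kernel-verified Lean document; each statement's English description precedes it below -/
import Mathlib

section
/- Let $v, w \in L^1[0,1]$ be non-negative integrable functions such that $\int_t^1 w(x)\,dx > 0$ for all $t < 1$ and likewise for $v$, and such that $\lim_{t \to 1^-} v(t)/w(t) = 1$ (with the convention $0/0 = 1$). Then $\lim_{n \to \infty} \frac{\int_0^1 t^n v(t)\,dt}{\int_0^1 t^n w(t)\,dt} = 1$. -/
open MeasureTheory Set Filter

private lemma moment_aux_ii {f : ℝ → ℝ} (hf : IntegrableOn f (Icc 0 1)) (n : ℕ) {a b : ℝ}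
    (ha : 0 ≤ a) (hb : b ≤ 1) (hab : a ≤ b) :
    IntervalIntegrable (fun t => t ^ n * f t) volume a b := by
  rw [intervalIntegrable_iff_integrableOn_Ioc_of_le hab]
  have hsub : Ioc a b ⊆ Icc 0 1 := fun x hx => ⟨ha.trans hx.1.le, hx.2.trans hb⟩
  refine Integrable.bdd_mul (c := 1) (hf.mono_set hsub)
    (Continuous.aestronglyMeasurable (by continuity)) ?_
  filter_upwards [ae_restrict_mem measurableSet_Ioc] with x hx
  rw [Real.norm_eq_abs, abs_of_nonneg (pow_nonneg (ha.trans hx.1.le) n)]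
  exact pow_le_one₀ (ha.trans hx.1.le) (hx.2.trans hb)

/-- If `v, w` are non-negative integrable weights on `[0,1]` with positive tails and
`v(t)/w(t) → 1` as `t → 1⁻`, then the ratio of their `n`-th moments tends to `1`. -/
theorem moment_ratio_tendsto_one
    (v w : ℝ → ℝ)
    (hv_nonneg : ∀ t ∈ Icc (0:ℝ) 1, 0 ≤ v t)
    (hw_nonneg : ∀ t ∈ Icc (0:ℝ) 1, 0 ≤ w t)
    (hv_int : IntegrableOn v (Icc (0:ℝ) 1))
    (hw_int : IntegrableOn w (Icc (0:ℝ) 1))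
    (hv_tail : ∀ t ∈ Ico (0:ℝ) 1, 0 < ∫ x in t..1, v x)
    (hw_tail : ∀ t ∈ Ico (0:ℝ) 1, 0 < ∫ x in t..1, w x)
    (hratio : Tendsto (fun t => if v t = 0 ∧ w t = 0 then 1 else v t / w t)
      (nhdsWithin 1 (Iio (1:ℝ))) (nhds 1)) :
    Tendsto (fun n : ℕ => (∫ t in (0:ℝ)..1, t ^ n * v t) / (∫ t in (0:ℝ)..1, t ^ n * w t))
      atTop (nhds 1) := by
  rw [Metric.tendsto_nhds]
  intro ε hε
  set ε₁ : ℝ := min (ε / 2) (1 / 2) with hε₁def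
  have hε₁pos : 0 < ε₁ := lt_min (by linarith) (by norm_num)
  have hε₁le : ε₁ ≤ ε / 2 := min_le_left _ _
  have hε₁half : ε₁ ≤ 1 / 2 := min_le_right _ _
  -- get δ₀ from hratio
  have hev := Metric.tendsto_nhds.1 hratio ε₁ hε₁pos
  obtain ⟨l, hl1, hl⟩ := mem_nhdsLT_iff_exists_Ioo_subset.1 hev
  set δ₀ : ℝ := max l 0 with hδ₀def
  have hδ₀0 : 0 ≤ δ₀ := le_max_right _ _
  have hδ₀1 : δ₀ < 1 := max_lt hl1 one_pos
  -- pointwise comparison on (δ₀, 1)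
  have hcomp : ∀ t ∈ Ioo δ₀ 1, |v t - w t| ≤ ε₁ * w t := by
    intro t ht
    have htIcc : t ∈ Icc (0:ℝ) 1 := ⟨hδ₀0.trans ht.1.le, ht.2.le⟩
    have hft : dist (if v t = 0 ∧ w t = 0 then 1 else v t / w t) 1 < ε₁ :=
      hl ⟨lt_of_le_of_lt (le_max_left l 0) ht.1, ht.2⟩
    by_cases h0 : v t = 0 ∧ w t = 0
    · simp [h0.1, h0.2]
    · rw [if_neg h0, Real.dist_eq] at hft
      have hwne : w t ≠ 0 := by
        intro hw0
        rw [hw0, div_zero] at hft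
        rw [abs_of_nonpos (by norm_num)] at hft
        linarith [hε₁half]
      have hwpos : 0 < w t := (hw_nonneg t htIcc).lt_of_ne' hwne
      have heq : v t / w t - 1 = (v t - w t) / w t := by field_simp
      rw [heq, abs_div, abs_of_pos hwpos] at hft
      calc |v t - w t| = |v t - w t| / w t * w t := by field_simp
        _ ≤ ε₁ * w t := by
            exact mul_le_mul_of_nonneg_right hft.le hwpos.le
  set δ' : ℝ := (δ₀ + 1) / 2 with hδ'def
  have hδ'0 : 0 ≤ δ' := by positivity
  have hδ'1 : δ' < 1 := by simp only [hδ'def]; linarith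
  have hδ₀δ' : δ₀ < δ' := by simp only [hδ'def]; linarith
  have hδ'pos : 0 < δ' := by simp only [hδ'def]; linarith
  set c : ℝ := ∫ x in δ'..1, w x with hcdef
  have hc : 0 < c := hw_tail δ' ⟨hδ'0, hδ'1⟩
  set V : ℝ := ∫ t in (0:ℝ)..1, v t with hVdef
  set W : ℝ := ∫ t in (0:ℝ)..1, w t with hWdef
  have hVW0 : 0 ≤ V + W := by
    have h1 : 0 ≤ V := intervalIntegral.integral_nonneg zero_le_one hv_nonneg
    have h2 : 0 ≤ W := intervalIntegral.integral_nonneg zero_le_one hw_nonneg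
    linarith
  -- integrability
  have hvi : ∀ (n : ℕ) (a b : ℝ), 0 ≤ a → b ≤ 1 → a ≤ b →
      IntervalIntegrable (fun t => t ^ n * v t) volume a b :=
    fun n a b ha hb hab => moment_aux_ii hv_int n ha hb hab
  have hwi : ∀ (n : ℕ) (a b : ℝ), 0 ≤ a → b ≤ 1 → a ≤ b →
      IntervalIntegrable (fun t => t ^ n * w t) volume a b :=
    fun n a b ha hb hab => moment_aux_ii hw_int n ha hb hab
  -- key per-n bounds
  have key : ∀ n : ℕ,
      |(∫ t in (0:ℝ)..1, t ^ n * v t) / (∫ t in (0:ℝ)..1, t ^ n * w t) - 1|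
        ≤ (δ₀ / δ') ^ n * ((V + W) / c) + ε₁ := by
    intro n
    set I : ℝ := ∫ t in (0:ℝ)..1, t ^ n * v t with hIdef
    set J : ℝ := ∫ t in (0:ℝ)..1, t ^ n * w t with hJdef
    set A : ℝ := ∫ t in (0:ℝ)..δ₀, t ^ n * v t with hAdef
    set B : ℝ := ∫ t in δ₀..1, t ^ n * v t with hBdef
    set C : ℝ := ∫ t in (0:ℝ)..δ₀, t ^ n * w t with hCdef
    set D : ℝ := ∫ t in δ₀..1, t ^ n * w t with hDdef
    have hIsplit : A + B = I :=
      intervalIntegral.integral_add_adjacent_intervals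
        (hvi n 0 δ₀ le_rfl hδ₀1.le hδ₀0) (hvi n δ₀ 1 hδ₀0 le_rfl hδ₀1.le)
    have hJsplit : C + D = J :=
      intervalIntegral.integral_add_adjacent_intervals
        (hwi n 0 δ₀ le_rfl hδ₀1.le hδ₀0) (hwi n δ₀ 1 hδ₀0 le_rfl hδ₀1.le)
    -- head bounds
    have headbound : ∀ (f : ℝ → ℝ), (∀ t ∈ Icc (0:ℝ) 1, 0 ≤ f t) →
        IntegrableOn f (Icc 0 1) →
        ∫ t in (0:ℝ)..δ₀, t ^ n * f t ≤ δ₀ ^ n * ∫ t in (0:ℝ)..1, f t := by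
      intro f hf_nonneg hf_int
      have h1 : ∫ t in (0:ℝ)..δ₀, t ^ n * f t ≤ ∫ t in (0:ℝ)..δ₀, δ₀ ^ n * f t := by
        have hf0 : IntervalIntegrable f volume 0 δ₀ := by
          have := moment_aux_ii hf_int 0 le_rfl hδ₀1.le hδ₀0
          simpa using this
        refine intervalIntegral.integral_mono_on hδ₀0 (moment_aux_ii hf_int n le_rfl hδ₀1.le hδ₀0)
          (hf0.const_mul _) ?_
        intro x hx
        exact mul_le_mul_of_nonneg_right (pow_le_pow_left₀ hx.1 hx.2 n)
          (hf_nonneg x ⟨hx.1, hx.2.trans hδ₀1.le⟩)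
      have h2 : ∫ t in (0:ℝ)..δ₀, δ₀ ^ n * f t = δ₀ ^ n * ∫ t in (0:ℝ)..δ₀, f t :=
        intervalIntegral.integral_const_mul _ _
      have h3 : ∫ t in (0:ℝ)..δ₀, f t ≤ ∫ t in (0:ℝ)..1, f t := by
        have hsplit : (∫ t in (0:ℝ)..δ₀, f t) + ∫ t in δ₀..1, f t = ∫ t in (0:ℝ)..1, f t := by
          have e1 := moment_aux_ii hf_int 0 le_rfl hδ₀1.le hδ₀0
          have e2 := moment_aux_ii hf_int 0 hδ₀0 le_rfl hδ₀1.le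
          simp only [pow_zero, one_mul] at e1 e2
          exact intervalIntegral.integral_add_adjacent_intervals e1 e2
        have htail : 0 ≤ ∫ t in δ₀..1, f t :=
          intervalIntegral.integral_nonneg hδ₀1.le
            (fun u hu => hf_nonneg u ⟨hδ₀0.trans hu.1, hu.2⟩)
        linarith
      calc ∫ t in (0:ℝ)..δ₀, t ^ n * f t ≤ δ₀ ^ n * ∫ t in (0:ℝ)..δ₀, f t := h1.trans_eq h2
        _ ≤ δ₀ ^ n * ∫ t in (0:ℝ)..1, f t :=
            mul_le_mul_of_nonneg_left h3 (pow_nonneg hδ₀0 n)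
    have hA : A ≤ δ₀ ^ n * V := headbound v hv_nonneg hv_int
    have hC : C ≤ δ₀ ^ n * W := headbound w hw_nonneg hw_int
    have hA0 : 0 ≤ A := intervalIntegral.integral_nonneg hδ₀0
      (fun u hu => mul_nonneg (pow_nonneg hu.1 n) (hv_nonneg u ⟨hu.1, hu.2.trans hδ₀1.le⟩))
    have hC0 : 0 ≤ C := intervalIntegral.integral_nonneg hδ₀0
      (fun u hu => mul_nonneg (pow_nonneg hu.1 n) (hw_nonneg u ⟨hu.1, hu.2.trans hδ₀1.le⟩))
    have hD0 : 0 ≤ D := intervalIntegral.integral_nonneg hδ₀1.le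
      (fun u hu => mul_nonneg (pow_nonneg (hδ₀0.trans hu.1) n) (hw_nonneg u ⟨hδ₀0.trans hu.1, hu.2⟩))
    -- tail comparison
    have hBD : |B - D| ≤ ε₁ * D := by
      have hsub : B - D = ∫ t in δ₀..1, (t ^ n * v t - t ^ n * w t) :=
        (intervalIntegral.integral_sub (hvi n δ₀ 1 hδ₀0 le_rfl hδ₀1.le)
          (hwi n δ₀ 1 hδ₀0 le_rfl hδ₀1.le)).symm
      rw [hsub, ← Real.norm_eq_abs]
      have hbd : ∀ᵐ t ∂(volume.restrict (Set.uIoc δ₀ 1)),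
          ‖t ^ n * v t - t ^ n * w t‖ ≤ ε₁ * (t ^ n * w t) := by
        rw [uIoc_of_le hδ₀1.le, Measure.restrict_congr_set Ioo_ae_eq_Ioc.symm]
        filter_upwards [ae_restrict_mem measurableSet_Ioo] with t ht
        have ht0 : 0 ≤ t := hδ₀0.trans ht.1.le
        rw [Real.norm_eq_abs, ← mul_sub, abs_mul, abs_of_nonneg (pow_nonneg ht0 n)]
        calc t ^ n * |v t - w t| ≤ t ^ n * (ε₁ * w t) :=
              mul_le_mul_of_nonneg_left (hcomp t ht) (pow_nonneg ht0 n)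
          _ = ε₁ * (t ^ n * w t) := by ring
      have := intervalIntegral.norm_integral_le_of_norm_le hδ₀1.le
        ((ae_restrict_iff' measurableSet_Ioc).1 (by rwa [uIoc_of_le hδ₀1.le] at hbd))
        ((hwi n δ₀ 1 hδ₀0 le_rfl hδ₀1.le).const_mul ε₁)
      rw [intervalIntegral.integral_const_mul] at this
      refine this.trans ?_
      exact le_rfl
    -- lower bound on J
    have hJlow : δ' ^ n * c ≤ J := by
      have hsplit : (∫ t in (0:ℝ)..δ', t ^ n * w t) + ∫ t in δ'..1, t ^ n * w t = J :=
        intervalIntegral.integral_add_adjacent_intervals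
          (hwi n 0 δ' le_rfl hδ'1.le hδ'0) (hwi n δ' 1 hδ'0 le_rfl hδ'1.le)
      have h0 : 0 ≤ ∫ t in (0:ℝ)..δ', t ^ n * w t :=
        intervalIntegral.integral_nonneg hδ'0
          (fun u hu => mul_nonneg (pow_nonneg hu.1 n) (hw_nonneg u ⟨hu.1, hu.2.trans hδ'1.le⟩))
      have h1 : δ' ^ n * c ≤ ∫ t in δ'..1, t ^ n * w t := by
        have e1 : (∫ t in δ'..1, δ' ^ n * w t) = δ' ^ n * c :=
          intervalIntegral.integral_const_mul _ _
        rw [← e1]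
        have hw0 : IntervalIntegrable w volume δ' 1 := by
          have := moment_aux_ii hw_int 0 hδ'0 le_rfl hδ'1.le
          simpa using this
        refine intervalIntegral.integral_mono_on hδ'1.le
          (hw0.const_mul _) (hwi n δ' 1 hδ'0 le_rfl hδ'1.le) ?_
        intro x hx
        exact mul_le_mul_of_nonneg_right (pow_le_pow_left₀ hδ'0 hx.1 n)
          (hw_nonneg x ⟨hδ'0.trans hx.1, hx.2⟩)
      linarith
    have hJpos : 0 < J := lt_of_lt_of_le (by positivity) hJlow
    have hDJ : D ≤ J := by linarith [hJsplit, hC0]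
    -- combine
    have hnum : |I - J| ≤ δ₀ ^ n * (V + W) + ε₁ * J := by
      have : |I - J| ≤ |A - C| + |B - D| := by
        rw [← hIsplit, ← hJsplit]
        calc |A + B - (C + D)| = |(A - C) + (B - D)| := by ring_nf
          _ ≤ |A - C| + |B - D| := abs_add_le _ _
      have hAC : |A - C| ≤ A + C := abs_sub _ _ |>.trans (by
        rw [abs_of_nonneg hA0, abs_of_nonneg hC0])
      have hεD : ε₁ * D ≤ ε₁ * J := mul_le_mul_of_nonneg_left hDJ hε₁pos.le
      nlinarith [hA, hC]
    have hJne : J ≠ 0 := hJpos.ne'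
    have heq2 : I / J - 1 = (I - J) / J := by field_simp
    rw [heq2, abs_div, abs_of_pos hJpos]
    calc |I - J| / J ≤ (δ₀ ^ n * (V + W) + ε₁ * J) / J := by gcongr
      _ = δ₀ ^ n * (V + W) / J + ε₁ := by
          rw [add_div, mul_div_cancel_right₀ ε₁ hJne]
      _ ≤ δ₀ ^ n * (V + W) / (δ' ^ n * c) + ε₁ := by
          have h1 : 0 ≤ δ₀ ^ n * (V + W) := mul_nonneg (pow_nonneg hδ₀0 n) hVW0
          gcongr
          all_goals first | exact h1 | exact hJlow | positivity
      _ = (δ₀ / δ') ^ n * ((V + W) / c) + ε₁ := by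
          rw [← div_mul_div_comm, ← div_pow]
  -- finish with the power tendsto
  have hratio01 : 0 ≤ δ₀ / δ' := div_nonneg hδ₀0 hδ'0
  have hratiolt : δ₀ / δ' < 1 := (div_lt_one hδ'pos).2 hδ₀δ'
  have hpow : Tendsto (fun n : ℕ => (δ₀ / δ') ^ n * ((V + W) / c)) atTop (nhds 0) := by
    have := (tendsto_pow_atTop_nhds_zero_of_lt_one hratio01 hratiolt).mul_const ((V + W) / c)
    simpa using this
  filter_upwards [hpow.eventually (gt_mem_nhds (show (0:ℝ) < ε / 2 by linarith))] with n hn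
  rw [Real.dist_eq]
  calc |(∫ t in (0:ℝ)..1, t ^ n * v t) / (∫ t in (0:ℝ)..1, t ^ n * w t) - 1|
      ≤ (δ₀ / δ') ^ n * ((V + W) / c) + ε₁ := key n
    _ < ε / 2 + ε / 2 := by
        apply add_lt_add_of_lt_of_le hn hε₁le
    _ = ε := by ring
end

section
/- Let $\mu$ be a finite positive Borel measure on $[0,1]$, for $x > 0$ let $v_x(t) = \int_{[t,1]} \frac{(s-t)^{x-1}}{\Gamma(x)}\,d\mu(s)$, and assume $v_1(t) > 0$ for all $0 \le t < 1$. Then for each $x > 0$, $\lim_{n \to \infty} \frac{n^x \int_0^1 t^n v_x(t)\,dt}{\int_{[0,1]} t^n\,d\mu(t)} = 1$. -/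
open MeasureTheory Set Filter

open scoped ENNReal

variable {x : ℝ}

noncomputable def cc (x : ℝ) (n : ℕ) : ℝ := ∫ u in (0:ℝ)..1, u ^ n * (1 - u) ^ (x - 1)

lemma integ_aux (hx : 0 < x) (n : ℕ) (s : ℝ) :
    IntervalIntegrable (fun t => t ^ n * (s - t) ^ (x - 1)) volume 0 s := by
  have h1 : IntervalIntegrable (fun t => (s - t) ^ (x - 1)) volume 0 s := by
    have := (intervalIntegral.intervalIntegrable_rpow' (a := s) (b := 0)
      (by linarith : (-1:ℝ) < x - 1)).comp_sub_left s
    simpa using this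
  have := h1.continuousOn_mul (g := fun t : ℝ => t ^ n) (by fun_prop)
  simpa using this

lemma cc_eq (hx : 0 < x) (n : ℕ) :
    cc x n = (n.factorial : ℝ) / ∏ j ∈ Finset.range (n + 1), (x + (j:ℝ)) := by
  have key : ((cc x n : ℝ) : ℂ) = Complex.betaIntegral (n + 1) x := by
    simp only [cc, Complex.betaIntegral]
    rw [← intervalIntegral.integral_ofReal]
    apply intervalIntegral.integral_congr
    intro u hu
    rw [uIcc_of_le (by norm_num : (0:ℝ) ≤ 1)] at hu
    push_cast
    rw [add_sub_cancel_right, Complex.cpow_natCast,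
      Complex.ofReal_cpow (by linarith [hu.2] : (0:ℝ) ≤ 1 - u)]
    push_cast
    ring
  rw [Complex.betaIntegral_symm, Complex.betaIntegral_eval_nat_add_one_right
    (by simpa using hx) n] at key
  have h2 : ((cc x n : ℝ) : ℂ) =
      (((n.factorial : ℝ) / ∏ j ∈ Finset.range (n + 1), (x + (j:ℝ)) : ℝ) : ℂ) := by
    rw [key]; push_cast; ring
  exact_mod_cast h2

lemma cc_nonneg (hx : 0 < x) (n : ℕ) : 0 ≤ cc x n := by
  apply intervalIntegral.integral_nonneg (by norm_num)
  intro u hu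
  exact mul_nonneg (pow_nonneg hu.1 n) (Real.rpow_nonneg (by linarith [hu.2]) _)

lemma tendsto_cc (hx : 0 < x) :
    Tendsto (fun n : ℕ => (n : ℝ) ^ x * cc x n / Real.Gamma x) atTop (nhds 1) := by
  have h1 : ∀ n : ℕ, (n : ℝ) ^ x * cc x n = Real.GammaSeq x n := by
    intro n
    rw [cc_eq hx n, Real.GammaSeq, mul_div_assoc]
  simp only [h1]
  have := (Real.GammaSeq_tendsto_Gamma x).div_const (Real.Gamma x)
  simpa [div_self (Real.Gamma_pos_of_pos hx).ne'] using this

lemma scaling (hx : 0 < x) (n : ℕ) {s : ℝ} (hs : 0 ≤ s) :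
    (∫ t in (0:ℝ)..s, t ^ n * (s - t) ^ (x - 1)) = s ^ ((n:ℝ) + x) * cc x n := by
  rcases eq_or_lt_of_le hs with rfl | hs'
  · simp [Real.zero_rpow (by positivity : (n:ℝ) + x ≠ 0)]
  · have h := intervalIntegral.integral_comp_mul_left
      (f := fun t => t ^ n * (s - t) ^ (x - 1)) (a := 0) (b := 1) (c := s) hs'.ne'
    simp only [mul_zero, mul_one] at h
    have h2 : (∫ u in (0:ℝ)..1, (s * u) ^ n * (s - s * u) ^ (x - 1))
        = (s ^ n * s ^ (x - 1)) * cc x n := by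
      rw [cc, ← intervalIntegral.integral_const_mul]
      apply intervalIntegral.integral_congr
      intro u hu
      rw [uIcc_of_le (by norm_num : (0:ℝ) ≤ 1)] at hu
      show (s * u) ^ n * (s - s * u) ^ (x - 1) = _
      have h3 : s - s * u = s * (1 - u) := by ring
      rw [h3, mul_pow, Real.mul_rpow hs (by linarith [hu.2])]
      ring
    rw [h2] at h
    have hsr : s ^ ((n:ℝ) + x) = s * (s ^ n * s ^ (x - 1)) := by
      rw [Real.rpow_add hs', ← Real.rpow_natCast s n, Real.rpow_sub_one hs'.ne']
      field_simp
    rw [eq_comm, inv_smul_eq_iff₀ hs'.ne'] at h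
    rw [h, smul_eq_mul, hsr]; ring

lemma ratio_tendsto (μ : Measure ℝ) [IsFiniteMeasure μ]
    (hpos : ∀ t ∈ Ico (0:ℝ) 1, 0 < μ (Icc t 1)) (hx : 0 < x) :
    Tendsto (fun n : ℕ => (∫ s in Icc (0:ℝ) 1, s ^ ((n:ℝ) + x) ∂μ) /
      (∫ t in Icc (0:ℝ) 1, t ^ n ∂μ)) atTop (nhds 1) := by
  set J : ℕ → ℝ := fun n => ∫ s in Icc (0:ℝ) 1, s ^ ((n:ℝ) + x) ∂μ with hJ
  set I : ℕ → ℝ := fun n => ∫ t in Icc (0:ℝ) 1, t ^ n ∂μ with hI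
  have hIntPow : ∀ n : ℕ, IntegrableOn (fun t : ℝ => t ^ n) (Icc 0 1) μ := fun n =>
    (continuous_pow n).continuousOn.integrableOn_compact isCompact_Icc
  have hIntRpow : ∀ n : ℕ, IntegrableOn (fun s : ℝ => s ^ ((n:ℝ) + x)) (Icc 0 1) μ := by
    intro n
    exact (continuousOn_id.rpow_const fun s _ => Or.inr (by positivity)).integrableOn_compact
      isCompact_Icc
  -- lower bound for I
  have hIlb : ∀ b : ℝ, 0 < b → b < 1 → ∀ n : ℕ,
      b ^ n * (μ (Icc b 1)).toReal ≤ I n := by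
    intro b hb0 hb1 n
    have hsub : Icc b 1 ⊆ Icc (0:ℝ) 1 := Icc_subset_Icc (by linarith) le_rfl
    have h1 : b ^ n * (μ (Icc b 1)).toReal = ∫ _ in Icc b 1, b ^ n ∂μ := by
      rw [setIntegral_const, smul_eq_mul, mul_comm]; rfl
    rw [h1]
    have h2 : (∫ _ in Icc b 1, b ^ n ∂μ) ≤ ∫ t in Icc b 1, t ^ n ∂μ := by
      apply setIntegral_mono_on (integrableOn_const)
        ((hIntPow n).mono_set hsub) measurableSet_Icc
      intro t ht
      exact pow_le_pow_left₀ hb0.le ht.1 n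
    refine h2.trans (setIntegral_mono_set (hIntPow n) ?_ (HasSubset.Subset.eventuallyLE hsub))
    filter_upwards [ae_restrict_mem measurableSet_Icc] with t ht
    exact pow_nonneg ht.1 n
  have hIpos : ∀ n : ℕ, 0 < I n := by
    intro n
    have := hIlb (1/2) (by norm_num) (by norm_num) n
    have h2 : 0 < ((1:ℝ)/2) ^ n * (μ (Icc (1/2 : ℝ) 1)).toReal := by
      apply mul_pos (by positivity)
      exact ENNReal.toReal_pos (hpos (1/2) ⟨by norm_num, by norm_num⟩).ne' (measure_ne_top _ _)
    linarith
  have hJnonneg : ∀ n : ℕ, 0 ≤ J n := by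
    intro n
    apply setIntegral_nonneg measurableSet_Icc
    intro s hs
    exact Real.rpow_nonneg hs.1 _
  have hJleI : ∀ n : ℕ, J n ≤ I n := by
    intro n
    apply setIntegral_mono_on (hIntRpow n) (hIntPow n) measurableSet_Icc
    intro t ht
    rcases eq_or_lt_of_le ht.1 with rfl | ht0
    · rw [Real.zero_rpow (by positivity : (n:ℝ) + x ≠ 0)]
      exact pow_nonneg le_rfl n
    · rw [← Real.rpow_natCast t n]
      exact Real.rpow_le_rpow_of_exponent_ge ht0 ht.2 (by linarith)
  -- main lower bound for J
  have hJlb : ∀ a : ℝ, 0 < a → a < 1 → ∀ n : ℕ,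
      a ^ x * (I n - a ^ n * (μ (univ : Set ℝ)).toReal) ≤ J n := by
    intro a ha0 ha1 n
    have hsub : Icc a 1 ⊆ Icc (0:ℝ) 1 := Icc_subset_Icc (by linarith) le_rfl
    -- J n ≥ ∫_{Icc a 1} s^(n+x)
    have h1 : (∫ s in Icc a 1, s ^ ((n:ℝ) + x) ∂μ) ≤ J n := by
      refine setIntegral_mono_set (hIntRpow n) ?_ (HasSubset.Subset.eventuallyLE hsub)
      filter_upwards [ae_restrict_mem measurableSet_Icc] with s hs
      exact Real.rpow_nonneg hs.1 _
    have h2 : a ^ x * (∫ s in Icc a 1, (s:ℝ) ^ n ∂μ) ≤ ∫ s in Icc a 1, s ^ ((n:ℝ) + x) ∂μ := by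
      rw [← integral_const_mul]
      apply setIntegral_mono_on (((hIntPow n).mono_set hsub).const_mul _)
        ((hIntRpow n).mono_set hsub) measurableSet_Icc
      intro s hs
      have hs0 : 0 < s := lt_of_lt_of_le ha0 hs.1
      rw [Real.rpow_add hs0, Real.rpow_natCast]
      rw [mul_comm]
      apply mul_le_mul_of_nonneg_left _ (pow_nonneg hs0.le n)
      exact Real.rpow_le_rpow ha0.le hs.1 hx.le
    -- ∫_{Icc a 1} s^n ≥ I n - a^n * M
    have hsplit : I n = (∫ s in Ico 0 a, (s:ℝ) ^ n ∂μ) + ∫ s in Icc a 1, (s:ℝ) ^ n ∂μ := by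
      rw [hI]
      rw [← Ico_union_Icc_eq_Icc ha0.le ha1.le]
      apply setIntegral_union
      · rw [Set.disjoint_left]; intro t ht1 ht2; exact absurd ht2.1 (not_le.2 ht1.2)
      · exact measurableSet_Icc
      · exact (hIntPow n).mono_set (by
          rw [← Ico_union_Icc_eq_Icc ha0.le ha1.le]; exact subset_union_left)
      · exact (hIntPow n).mono_set hsub
    have h3 : (∫ s in Ico 0 a, (s:ℝ) ^ n ∂μ) ≤ a ^ n * (μ (univ : Set ℝ)).toReal := by
      have hsub2 : Ico (0:ℝ) a ⊆ Icc 0 1 := fun t ht => ⟨ht.1, by linarith [ht.2]⟩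
      have hb : (∫ s in Ico 0 a, (s:ℝ) ^ n ∂μ) ≤ ∫ _ in Ico 0 a, a ^ n ∂μ := by
        apply setIntegral_mono_on ((hIntPow n).mono_set hsub2)
          (integrableOn_const) measurableSet_Ico
        intro s hs
        exact pow_le_pow_left₀ hs.1 hs.2.le n
      rw [setIntegral_const, smul_eq_mul, mul_comm] at hb
      refine hb.trans ?_
      apply mul_le_mul_of_nonneg_left _ (pow_nonneg ha0.le n)
      exact ENNReal.toReal_mono (measure_ne_top _ _) (measure_mono (subset_univ _))
    have h4 : I n - a ^ n * (μ (univ : Set ℝ)).toReal ≤ ∫ s in Icc a 1, (s:ℝ) ^ n ∂μ := by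
      linarith
    calc a ^ x * (I n - a ^ n * (μ (univ : Set ℝ)).toReal)
        ≤ a ^ x * ∫ s in Icc a 1, (s:ℝ) ^ n ∂μ :=
          mul_le_mul_of_nonneg_left h4 (Real.rpow_nonneg ha0.le x)
      _ ≤ ∫ s in Icc a 1, s ^ ((n:ℝ) + x) ∂μ := h2
      _ ≤ J n := h1
  -- ε argument
  rw [Metric.tendsto_atTop]
  intro ε hε
  set ε' : ℝ := min ε (1/2) with hε'
  have hε'0 : 0 < ε' := lt_min hε (by norm_num)
  have hε'le : ε' ≤ 1/2 := min_le_right _ _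
  set δ : ℝ := ε' / 2 with hδ
  have hδ0 : 0 < δ := by positivity
  have hδle : δ ≤ 1/4 := by rw [hδ]; linarith
  set a : ℝ := (1 - δ) ^ x⁻¹ with ha
  have h1δ : 0 < 1 - δ := by linarith
  have ha0 : 0 < a := Real.rpow_pos_of_pos h1δ _
  have ha1 : a < 1 := Real.rpow_lt_one h1δ.le (by linarith) (by positivity)
  have hax : a ^ x = 1 - δ := Real.rpow_inv_rpow h1δ.le hx.ne'
  set b : ℝ := (1 + a) / 2 with hb
  have hab : a < b := by rw [hb]; linarith
  have hb0 : 0 < b := lt_trans ha0 hab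
  have hb1 : b < 1 := by rw [hb]; linarith
  set M : ℝ := (μ (univ : Set ℝ)).toReal with hM
  have hM0 : 0 ≤ M := ENNReal.toReal_nonneg
  set mb : ℝ := (μ (Icc b 1)).toReal with hmb
  have hmb0 : 0 < mb :=
    ENNReal.toReal_pos (hpos b ⟨hb0.le, hb1⟩).ne' (measure_ne_top _ _)
  -- eventually a^n * M < δ * (b^n * mb)
  have hgeo : Tendsto (fun n : ℕ => (a / b) ^ n * (M / mb)) atTop (nhds 0) := by
    have := (tendsto_pow_atTop_nhds_zero_of_lt_one (by positivity)
      ((div_lt_one hb0).2 hab)).mul_const (M / mb)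
    simpa using this
  have hev : ∀ᶠ n : ℕ in atTop, a ^ n * M < δ * (b ^ n * mb) := by
    filter_upwards [hgeo.eventually (eventually_lt_nhds hδ0)] with n hn
    have hbn : 0 < b ^ n := pow_pos hb0 n
    rw [div_pow, div_mul_div_comm, div_lt_iff₀ (by positivity)] at hn
    calc a ^ n * M < δ * (b ^ n * mb) := by nlinarith
      _ = δ * (b ^ n * mb) := rfl
  obtain ⟨N, hN⟩ := eventually_atTop.1 hev
  refine ⟨N, fun n hn => ?_⟩
  have hkey : a ^ n * M < δ * I n := by
    have := hIlb b hb0 hb1 n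
    have h2 := hN n hn
    nlinarith
  have hJn : (1 - ε') * I n < J n := by
    have h1 := hJlb a ha0 ha1 n
    rw [hax] at h1
    have hIn := hIpos n
    have hm := mul_lt_mul_of_pos_left hkey h1δ
    have hsq : 0 < δ * δ * I n := by positivity
    nlinarith [hm, hsq]
  have hfn1 : J n / I n ≤ 1 := div_le_one_of_le₀ (hJleI n) (hIpos n).le
  have hfn2 : 1 - ε' < J n / I n := by
    rw [lt_div_iff₀ (hIpos n)]
    linarith [hJn]
  have habs : |J n / I n - 1| = 1 - J n / I n := by
    rw [abs_of_nonpos (by linarith)]; ring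
  rw [Real.dist_eq, habs]
  have hle : ε' ≤ ε := min_le_left _ _
  linarith

lemma fubini_key (μ : Measure ℝ) [IsFiniteMeasure μ] (hres : μ.restrict (Icc 0 1) = μ)
    (hx : 0 < x) (n : ℕ) :
    (∫ t in (0:ℝ)..1, t ^ n * ∫ s in Icc t 1, (s - t) ^ (x - 1) ∂μ)
      = cc x n * ∫ s in Icc (0:ℝ) 1, s ^ ((n:ℝ) + x) ∂μ := by
  have hae : ∀ᵐ s ∂μ, s ∈ Icc (0:ℝ) 1 := by
    rw [← hres]; exact ae_restrict_mem measurableSet_Icc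
  -- the kernel in ℝ≥0∞
  set G : ℝ → ℝ → ℝ≥0∞ := fun t s =>
    (Icc t 1).indicator (fun s => ENNReal.ofReal ((s - t) ^ (x - 1))) s with hG
  set F : ℝ → ℝ → ℝ≥0∞ := fun t s => ENNReal.ofReal (t ^ n) * G t s with hF
  have hGmeas : Measurable (Function.uncurry G) := by
    have h1 : Function.uncurry G = fun p : ℝ × ℝ =>
        Set.indicator {q : ℝ × ℝ | q.1 ≤ q.2 ∧ q.2 ≤ 1}
          (fun q => ENNReal.ofReal ((q.2 - q.1) ^ (x - 1))) p := by
      ext p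
      simp only [Function.uncurry, hG, Set.indicator_apply, mem_Icc, mem_setOf_eq]
    rw [h1]
    apply Measurable.indicator
    · exact (Measurable.ennreal_ofReal (by fun_prop))
    · exact (measurableSet_le measurable_fst measurable_snd).inter
        (measurableSet_le measurable_snd measurable_const)
  have hFmeas : Measurable (Function.uncurry F) := by
    have : Function.uncurry F = fun p : ℝ × ℝ =>
        ENNReal.ofReal (p.1 ^ n) * Function.uncurry G p := rfl
    rw [this]
    exact ((measurable_fst.pow_const n).ennreal_ofReal).mul hGmeas
  have hGsmeas : ∀ t, Measurable (G t) := fun t =>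
    (Measurable.ennreal_ofReal (by fun_prop)).indicator measurableSet_Icc
  set L : ℝ → ℝ≥0∞ := fun t => ∫⁻ s in Icc t 1, ENNReal.ofReal ((s - t) ^ (x - 1)) ∂μ with hL
  have hGint : ∀ t, (∫⁻ s, G t s ∂μ) = L t := fun t =>
    lintegral_indicator measurableSet_Icc _
  have hFint : ∀ t, (∫⁻ s, F t s ∂μ) = ENNReal.ofReal (t ^ n) * L t := by
    intro t
    rw [hF]
    simp only
    rw [lintegral_const_mul _ (hGsmeas t), hGint]
  have hLmeas : Measurable L := by
    have := hGmeas.lintegral_prod_right (ν := μ)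
    simpa [hGint] using this
  -- pointwise identity for the inner Bochner integral
  have hinner : ∀ t : ℝ, (∫ s in Icc t 1, (s - t) ^ (x - 1) ∂μ) = (L t).toReal := by
    intro t
    rw [hL]
    simp only
    rw [integral_eq_lintegral_of_nonneg_ae]
    · filter_upwards [ae_restrict_mem measurableSet_Icc] with s hs
      exact Real.rpow_nonneg (by linarith [hs.1]) _
    · exact (by fun_prop : Measurable fun s : ℝ => (s - t) ^ (x - 1)).aestronglyMeasurable
  -- compute the swapped integral
  have hswapped : ∀ᵐ s ∂μ, (∫⁻ t in Ioc (0:ℝ) 1, F t s ∂volume)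
      = ENNReal.ofReal (s ^ ((n:ℝ) + x) * cc x n) := by
    filter_upwards [hae] with s hs
    have h1 : ∀ t : ℝ, F t s = (Iic s).indicator
        (fun t => ENNReal.ofReal (t ^ n) * ENNReal.ofReal ((s - t) ^ (x - 1))) t := by
      intro t
      simp only [hF, hG, Set.indicator_apply, mem_Iic, mem_Icc]
      by_cases h : t ≤ s
      · simp [h, hs.2]
      · simp [h]
    simp_rw [h1]
    rw [lintegral_indicator measurableSet_Iic, Measure.restrict_restrict measurableSet_Iic]
    have h2 : Iic s ∩ Ioc (0:ℝ) 1 = Ioc 0 s := by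
      ext t
      simp only [mem_inter_iff, mem_Iic, mem_Ioc]
      constructor
      · rintro ⟨h1', h2', _⟩; exact ⟨h2', h1'⟩
      · rintro ⟨h1', h2'⟩; exact ⟨h2', h1', le_trans h2' hs.2⟩
    rw [h2]
    have h3 : (∫⁻ t in Ioc (0:ℝ) s, ENNReal.ofReal (t ^ n) * ENNReal.ofReal ((s - t) ^ (x - 1)))
        = ∫⁻ t in Ioc (0:ℝ) s, ENNReal.ofReal (t ^ n * (s - t) ^ (x - 1)) := by
      apply lintegral_congr_ae
      filter_upwards [ae_restrict_mem measurableSet_Ioc] with t ht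
      rw [ENNReal.ofReal_mul (pow_nonneg ht.1.le n)]
    rw [h3, ← ofReal_integral_eq_lintegral_ofReal]
    · rw [← intervalIntegral.integral_of_le hs.1, scaling hx n hs.1]
    · have hii := integ_aux hx n s
      rw [intervalIntegrable_iff, uIoc_of_le hs.1] at hii
      exact hii
    · filter_upwards [ae_restrict_mem measurableSet_Ioc] with t ht
      exact mul_nonneg (pow_nonneg ht.1.le n) (Real.rpow_nonneg (by linarith [ht.2]) _)
  -- swap
  have hswap : (∫⁻ t in Ioc (0:ℝ) 1, ∫⁻ s, F t s ∂μ ∂volume)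
      = ∫⁻ s, ∫⁻ t in Ioc (0:ℝ) 1, F t s ∂volume ∂μ :=
    lintegral_lintegral_swap hFmeas.aemeasurable
  have hRHSint : Integrable (fun s : ℝ => s ^ ((n:ℝ) + x) * cc x n) μ := by
    rw [← hres]
    exact ((continuousOn_id.rpow_const fun s _ => Or.inr (by positivity)).integrableOn_compact
      isCompact_Icc).mul_const _
  have hRHS : (∫⁻ s, ENNReal.ofReal (s ^ ((n:ℝ) + x) * cc x n) ∂μ)
      = ENNReal.ofReal (∫ s, s ^ ((n:ℝ) + x) * cc x n ∂μ) := by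
    rw [← ofReal_integral_eq_lintegral_ofReal hRHSint]
    filter_upwards [hae] with s hs
    exact mul_nonneg (Real.rpow_nonneg hs.1 _) (cc_nonneg hx n)
  have htotal : (∫⁻ t in Ioc (0:ℝ) 1, ∫⁻ s, F t s ∂μ ∂volume)
      = ENNReal.ofReal (∫ s, s ^ ((n:ℝ) + x) * cc x n ∂μ) := by
    rw [hswap, lintegral_congr_ae hswapped, hRHS]
  have hfin : (∫⁻ t in Ioc (0:ℝ) 1, ∫⁻ s, F t s ∂μ ∂volume) ≠ ⊤ := by
    rw [htotal]; exact ENNReal.ofReal_ne_top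
  -- a.e. finiteness of L on Ioc 0 1
  have hFtmeas : Measurable (fun t => ∫⁻ s, F t s ∂μ) := hFmeas.lintegral_prod_right
  have haefin : ∀ᵐ t ∂(volume.restrict (Ioc (0:ℝ) 1)), L t < ⊤ := by
    filter_upwards [ae_lt_top hFtmeas hfin, ae_restrict_mem measurableSet_Ioc] with t h1 h2
    rw [hFint t] at h1
    by_contra h
    rw [not_lt, top_le_iff] at h
    rw [h, ENNReal.mul_top (by
      simp only [ne_eq, ENNReal.ofReal_eq_zero, not_le]
      exact pow_pos h2.1 n)] at h1
    exact (lt_irrefl _ h1).elim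
  -- LHS conversion
  set g : ℝ → ℝ := fun t => t ^ n * ∫ s in Icc t 1, (s - t) ^ (x - 1) ∂μ with hg
  have hgL : g = fun t => t ^ n * (L t).toReal := by
    funext t; rw [hg]; simp only [hinner]
  have hgmeas : Measurable g := by
    rw [hgL]
    exact (measurable_id.pow_const n).mul (ENNReal.measurable_toReal.comp hLmeas)
  have hLHS : (∫ t in (0:ℝ)..1, g t)
      = (∫⁻ t in Ioc (0:ℝ) 1, ENNReal.ofReal (g t) ∂volume).toReal := by
    rw [intervalIntegral.integral_of_le zero_le_one, integral_eq_lintegral_of_nonneg_ae]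
    · filter_upwards [ae_restrict_mem measurableSet_Ioc] with t ht
      rw [hg]
      apply mul_nonneg (pow_nonneg ht.1.le n)
      apply setIntegral_nonneg measurableSet_Icc
      intro s hs
      exact Real.rpow_nonneg (by linarith [hs.1]) _
    · exact hgmeas.aestronglyMeasurable
  have hLHS2 : (∫⁻ t in Ioc (0:ℝ) 1, ENNReal.ofReal (g t) ∂volume)
      = ∫⁻ t in Ioc (0:ℝ) 1, ∫⁻ s, F t s ∂μ ∂volume := by
    apply lintegral_congr_ae
    filter_upwards [haefin, ae_restrict_mem measurableSet_Ioc] with t h1 h2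
    rw [hFint t, hgL]
    simp only
    rw [ENNReal.ofReal_mul (pow_nonneg h2.1.le n), ENNReal.ofReal_toReal h1.ne]
  have hfinal : (∫ s, s ^ ((n:ℝ) + x) * cc x n ∂μ)
      = (∫ s in Icc (0:ℝ) 1, s ^ ((n:ℝ) + x) ∂μ) * cc x n := by
    conv_lhs => rw [← hres]
    exact integral_mul_const _ _
  rw [hLHS, hLHS2, htotal, hfinal, ENNReal.toReal_ofReal, mul_comm]
  apply mul_nonneg _ (cc_nonneg hx n)
  apply setIntegral_nonneg measurableSet_Icc
  intro s hs
  exact Real.rpow_nonneg hs.1 _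

/-- If `μ` is a finite positive Borel measure on `[0,1]` with `μ([t,1]) > 0` for all `t < 1`
(i.e. `v₁(t) > 0`), then for each `x > 0`,
`n^x ∫_0^1 t^n v_x(t) dt / ∫_{[0,1]} t^n dμ(t) → 1`. -/
theorem fractional_integral_moments_asymptotics
    (μ : Measure ℝ) [IsFiniteMeasure μ] (hμ : μ (Icc (0:ℝ) 1)ᶜ = 0)
    (hpos : ∀ t ∈ Ico (0:ℝ) 1, 0 < μ (Icc t 1))
    (x : ℝ) (hx : 0 < x) :
    Tendsto (fun n : ℕ =>
        ((n : ℝ) ^ x * ∫ t in (0:ℝ)..1,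
          t ^ n * ∫ s in Icc t 1, (s - t) ^ (x - 1) / Real.Gamma x ∂μ) /
        (∫ t in Icc (0:ℝ) 1, t ^ n ∂μ))
      atTop (nhds 1) := by
  have hres : μ.restrict (Icc 0 1) = μ := by
    apply Measure.restrict_eq_self_of_ae_mem
    rw [ae_iff]
    simpa [Set.compl_def] using hμ
  have heq : ∀ n : ℕ, ((n : ℝ) ^ x * ∫ t in (0:ℝ)..1,
          t ^ n * ∫ s in Icc t 1, (s - t) ^ (x - 1) / Real.Gamma x ∂μ) /
        (∫ t in Icc (0:ℝ) 1, t ^ n ∂μ)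
      = ((n:ℝ) ^ x * cc x n / Real.Gamma x) *
        ((∫ s in Icc (0:ℝ) 1, s ^ ((n:ℝ) + x) ∂μ) / (∫ t in Icc (0:ℝ) 1, t ^ n ∂μ)) := by
    intro n
    have h1 : (∫ t in (0:ℝ)..1, t ^ n * ∫ s in Icc t 1, (s - t) ^ (x - 1) / Real.Gamma x ∂μ)
        = (∫ t in (0:ℝ)..1, t ^ n * ∫ s in Icc t 1, (s - t) ^ (x - 1) ∂μ) / Real.Gamma x := by
      rw [← intervalIntegral.integral_div]
      apply intervalIntegral.integral_congr
      intro t _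
      show t ^ n * (∫ s in Icc t 1, (s - t) ^ (x - 1) / Real.Gamma x ∂μ) = _
      rw [integral_div]
      ring
    rw [h1, fubini_key μ hres hx n]
    ring
  simp only [heq]
  have hfin := (tendsto_cc hx).mul (ratio_tendsto μ hpos hx)
  simpa using hfin
end

section
/- Let $v \in L^1[0,1]$ be a weight and let $\widehat v(t) = \int_t^1 v(s)\,ds$. Then $\widehat v$ is doubling near 1 (i.e., there exists $c > 0$ with $\widehat v(t) \le c\, \widehat v(\frac{1+t}{2})$ for all $t \in [0,1)$) if and only if there exists $M > 1$ such that $\int_t^1 \widehat v(s)\,ds \le (1-t)\widehat v(t) \le M \int_t^1 \widehat v(s)\,ds$ for all $t \in [0,1)$. -/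
open MeasureTheory Set intervalIntegral

namespace DoublingAux

variable {f : ℝ → ℝ}

lemma intInt (hf : IntegrableOn f (Icc (0:ℝ) 1)) {a b : ℝ}
    (ha : a ∈ Icc (0:ℝ) 1) (hb : b ∈ Icc (0:ℝ) 1) :
    IntervalIntegrable f volume a b := by
  refine (hf.mono_set ?_).intervalIntegrable
  have h01 : uIcc (0:ℝ) 1 = Icc (0:ℝ) 1 := uIcc_of_le zero_le_one
  have : uIcc a b ⊆ uIcc (0:ℝ) 1 :=
    uIcc_subset_uIcc (by rwa [h01]) (by rwa [h01])
  rwa [h01] at this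

lemma tail_split (hf : IntegrableOn f (Icc (0:ℝ) 1)) {a b : ℝ}
    (ha : a ∈ Icc (0:ℝ) 1) (hb : b ∈ Icc (0:ℝ) 1) :
    (∫ x in a..1, f x) = (∫ x in a..b, f x) + ∫ x in b..1, f x :=
  (integral_add_adjacent_intervals (intInt hf ha hb)
    (intInt hf hb (right_mem_Icc.mpr zero_le_one))).symm

lemma tail_nonneg (hpos : ∀ x ∈ Icc (0:ℝ) 1, 0 ≤ f x) {t : ℝ}
    (ht : t ∈ Icc (0:ℝ) 1) : 0 ≤ ∫ x in t..1, f x :=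
  integral_nonneg ht.2 (fun u hu => hpos u ⟨le_trans ht.1 hu.1, hu.2⟩)

lemma tail_anti (hf : IntegrableOn f (Icc (0:ℝ) 1))
    (hpos : ∀ x ∈ Icc (0:ℝ) 1, 0 ≤ f x) {a b : ℝ}
    (ha : a ∈ Icc (0:ℝ) 1) (hb : b ∈ Icc (0:ℝ) 1) (hab : a ≤ b) :
    (∫ x in b..1, f x) ≤ ∫ x in a..1, f x := by
  rw [tail_split hf ha hb]
  have : 0 ≤ ∫ x in a..b, f x :=
    integral_nonneg hab (fun u hu => hpos u ⟨le_trans ha.1 hu.1, le_trans hu.2 hb.2⟩)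
  linarith

lemma tail_cont (hf : IntegrableOn f (Icc (0:ℝ) 1)) :
    ContinuousOn (fun t => ∫ x in t..1, f x) (Icc (0:ℝ) 1) := by
  have h01 : uIcc (0:ℝ) 1 = Icc (0:ℝ) 1 := uIcc_of_le zero_le_one
  have h1 : ContinuousOn (fun t => ∫ x in (0:ℝ)..t, f x) (Icc (0:ℝ) 1) := by
    have := continuousOn_primitive_interval (a := (0:ℝ)) (b := 1) (μ := volume)
      (f := f) (by rwa [h01])
    rwa [h01] at this
  have h2 : ContinuousOn (fun t => (∫ x in (0:ℝ)..1, f x) - ∫ x in (0:ℝ)..t, f x)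
      (Icc (0:ℝ) 1) := continuousOn_const.sub h1
  refine h2.congr (fun t ht => ?_)
  have := tail_split hf (left_mem_Icc.mpr zero_le_one) ht
  simp only at this ⊢
  linarith

/-- Left inequality: `∫_t^1 f̂ ≤ (1-t) f̂(t)` for a nonincreasing tail. -/
lemma left_ineq (hf : IntegrableOn f (Icc (0:ℝ) 1))
    (hpos : ∀ x ∈ Icc (0:ℝ) 1, 0 ≤ f x) {t : ℝ} (ht : t ∈ Icc (0:ℝ) 1) :
    (∫ s in t..1, ∫ x in s..1, f x) ≤ (1 - t) * ∫ x in t..1, f x := by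
  have hFint : IntervalIntegrable (fun s => ∫ x in s..1, f x) volume t 1 :=
    ((tail_cont hf).mono (Icc_subset_Icc ht.1 le_rfl)).intervalIntegrable_of_Icc ht.2
  have hmono : ∀ s ∈ Icc t 1, (∫ x in s..1, f x) ≤ ∫ x in t..1, f x := fun s hs =>
    tail_anti hf hpos ht ⟨le_trans ht.1 hs.1, hs.2⟩ hs.1
  calc (∫ s in t..1, ∫ x in s..1, f x)
      ≤ ∫ s in t..1, (∫ x in t..1, f x) :=
        integral_mono_on ht.2 hFint intervalIntegrable_const hmono
    _ = (1 - t) * ∫ x in t..1, f x := by simp [smul_eq_mul]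

end DoublingAux

open DoublingAux Real

/-- A weight `v` on `[0,1]` has doubling tail `v̂` near `1` if and only if there is `M > 1`
with `∫_t^1 v̂ ≤ (1-t) v̂(t) ≤ M ∫_t^1 v̂` for all `t ∈ [0,1)`. -/
theorem doubling_iff_tail_comparison
    (v : ℝ → ℝ) (hv_nonneg : ∀ t ∈ Icc (0:ℝ) 1, 0 ≤ v t)
    (hv_int : IntegrableOn v (Icc (0:ℝ) 1))
    (hv_tail : ∀ t ∈ Ico (0:ℝ) 1, 0 < ∫ x in t..1, v x) :
    (∃ c > 0, ∀ t ∈ Ico (0:ℝ) 1,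
        (∫ x in t..1, v x) ≤ c * ∫ x in ((1+t)/2)..1, v x)
    ↔ (∃ M > 1, ∀ t ∈ Ico (0:ℝ) 1,
        (∫ s in t..1, ∫ x in s..1, v x) ≤ (1 - t) * ∫ x in t..1, v x ∧
        (1 - t) * (∫ x in t..1, v x) ≤ M * ∫ s in t..1, ∫ x in s..1, v x) := by
  set F : ℝ → ℝ := fun t => ∫ x in t..1, v x with hF
  have hFcont : ContinuousOn F (Icc (0:ℝ) 1) := tail_cont hv_int
  have hFint : IntegrableOn F (Icc (0:ℝ) 1) :=
    hFcont.integrableOn_compact isCompact_Icc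
  have hFnonneg : ∀ t ∈ Icc (0:ℝ) 1, 0 ≤ F t := fun t ht => tail_nonneg hv_nonneg ht
  set W : ℝ → ℝ := fun t => ∫ s in t..1, F s with hW
  constructor
  · -- doubling → comparison
    rintro ⟨c, hc, hdbl⟩
    refine ⟨2 * c + 2, by linarith, fun t ht => ?_⟩
    have ht1 : t ∈ Icc (0:ℝ) 1 := ⟨ht.1, ht.2.le⟩
    refine ⟨left_ineq hv_int hv_nonneg ht1, ?_⟩
    set m : ℝ := (1 + t) / 2 with hm
    have hm1 : m ∈ Icc (0:ℝ) 1 := ⟨by simp [hm]; linarith [ht.1], by simp [hm]; linarith [ht.2]⟩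
    have htm : t ≤ m := by simp [hm]; linarith [ht.2]
    -- W t ≥ (m - t) * F m
    have hsplit : W t = (∫ s in t..m, F s) + ∫ s in m..1, F s :=
      tail_split hFint ht1 hm1
    have h1 : (m - t) * F m ≤ ∫ s in t..m, F s := by
      have : ∫ s in t..m, F m ≤ ∫ s in t..m, F s := by
        refine integral_mono_on htm intervalIntegrable_const
          (((tail_cont hv_int).mono (Icc_subset_Icc ht1.1 hm1.2)).intervalIntegrable_of_Icc htm)
          (fun s hs => tail_anti hv_int hv_nonneg ⟨le_trans ht1.1 hs.1, le_trans hs.2 hm1.2⟩ hm1 hs.2)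
      simpa [smul_eq_mul, mul_comm] using this
    have h2 : 0 ≤ ∫ s in m..1, F s := tail_nonneg hFnonneg hm1
    have h3 : F t ≤ c * F m := hdbl t ht
    have h4 : m - t = (1 - t) / 2 := by simp [hm]; ring
    have hFm : 0 ≤ F m := hFnonneg m hm1
    have hFt : 0 ≤ F t := hFnonneg t ht1
    -- (1-t) F t ≤ 2c * W t
    nlinarith [mul_le_mul_of_nonneg_left h3 (by linarith [ht.2] : (0:ℝ) ≤ 1 - t)]
  · -- comparison → doubling
    rintro ⟨M, hM1, hcmp⟩
    have hMpos : (0:ℝ) < M := by linarith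
    refine ⟨M * Real.exp (M * Real.log 2), by positivity, fun t ht => ?_⟩
    have ht1 : t ∈ Icc (0:ℝ) 1 := ⟨ht.1, ht.2.le⟩
    set m : ℝ := (1 + t) / 2 with hm
    have hmIco : m ∈ Ico (0:ℝ) 1 := ⟨by simp [hm]; linarith [ht.1], by simp [hm]; linarith [ht.2]⟩
    have hm1 : m ∈ Icc (0:ℝ) 1 := ⟨hmIco.1, hmIco.2.le⟩
    have htm : t < m := by simp [hm]; linarith [ht.2]
    -- W positive on [0,1)
    have hWpos : ∀ s ∈ Ico (0:ℝ) 1, 0 < W s := by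
      intro s hs
      have h := (hcmp s hs).2
      have hFs : 0 < F s := hv_tail s hs
      nlinarith [hs.2]
    have hWcont : ContinuousOn W (Icc (0:ℝ) 1) := tail_cont hFint
    -- derivative of W
    have hWderiv : ∀ s ∈ Ioo (0:ℝ) 1, HasDerivAt W (-F s) s := by
      intro s hs
      have hio : Ioo (0:ℝ) 1 ⊆ Icc (0:ℝ) 1 := Ioo_subset_Icc_self
      refine integral_hasDerivAt_left
        (intInt hFint ⟨hs.1.le, hs.2.le⟩ (right_mem_Icc.mpr zero_le_one))
        (ContinuousOn.stronglyMeasurableAtFilter isOpen_Ioo (hFcont.mono hio) s hs)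
        ((hFcont.mono hio).continuousAt (Ioo_mem_nhds hs.1 hs.2))
    -- the auxiliary function h
    set g : ℝ → ℝ := fun s => Real.log (W s) - M * Real.log (1 - s) with hg
    have hsub : Icc t m ⊆ Icc (0:ℝ) 1 := Icc_subset_Icc ht1.1 hm1.2
    have hsubIco : Icc t m ⊆ Ico (0:ℝ) 1 := fun x hx =>
      ⟨le_trans ht1.1 hx.1, lt_of_le_of_lt hx.2 hmIco.2⟩
    have hd : ∀ s ∈ Ioo t m, HasDerivAt g (-F s / W s + M / (1 - s)) s := by
      intro s hs
      have hsIoo : s ∈ Ioo (0:ℝ) 1 := ⟨lt_of_le_of_lt ht1.1 hs.1, lt_trans hs.2 hmIco.2⟩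
      have hWs : 0 < W s := hWpos s ⟨hsIoo.1.le, hsIoo.2⟩
      have h1s : (0:ℝ) < 1 - s := by linarith [hsIoo.2]
      have hd1 : HasDerivAt (fun x => Real.log (W x)) (-F s / W s) s :=
        (hWderiv s hsIoo).log hWs.ne'
      have hd2 : HasDerivAt (fun x => Real.log (1 - x)) (-1 / (1 - s)) s := by
        have h0 : HasDerivAt (fun x : ℝ => 1 - x) (-1) s := by
          exact ((hasDerivAt_const s (1:ℝ)).sub (hasDerivAt_id s)).congr_deriv (by norm_num)
        simpa using h0.log h1s.ne'
      have := hd1.sub ((hd2.const_mul M))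
      exact this.congr_deriv (by ring)
    have hmono : MonotoneOn g (Icc t m) := by
      refine monotoneOn_of_deriv_nonneg (convex_Icc t m) ?_ ?_ ?_
      · refine ContinuousOn.sub ?_ (continuousOn_const.mul ?_)
        · exact ContinuousOn.log (hWcont.mono hsub)
            (fun x hx => (hWpos x (hsubIco hx)).ne')
        · exact ContinuousOn.log (continuousOn_const.sub continuousOn_id)
            (fun x hx => by
              have h2 := (hsubIco hx).2
              show (1:ℝ) - x ≠ 0
              intro h; nlinarith)
      · rw [interior_Icc]
        exact fun s hs => (hd s hs).differentiableAt.differentiableWithinAt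
      · rw [interior_Icc]
        intro s hs
        have hsIco : s ∈ Ico (0:ℝ) 1 :=
          ⟨le_trans ht1.1 hs.1.le, lt_trans hs.2 hmIco.2⟩
        have hWs : 0 < W s := hWpos s hsIco
        have h1s : (0:ℝ) < 1 - s := by linarith [hsIco.2]
        have hineq : (1 - s) * F s ≤ M * W s := (hcmp s hsIco).2
        rw [(hd s hs).deriv, neg_div]
        have : F s / W s ≤ M / (1 - s) := by
          rw [div_le_div_iff₀ hWs h1s]
          nlinarith [hineq]
        linarith
    -- conclude
    have hgtm : g t ≤ g m := hmono (left_mem_Icc.mpr htm.le) (right_mem_Icc.mpr htm.le) htm.le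
    have hWt : 0 < W t := hWpos t ht
    have hWm : 0 < W m := hWpos m hmIco
    have h1t : (0:ℝ) < 1 - t := by linarith [ht.2]
    have h1m : (0:ℝ) < 1 - m := by linarith [hmIco.2]
    have hratio : (1 - t) = 2 * (1 - m) := by simp [hm]; ring
    have hlog : Real.log (1 - t) - Real.log (1 - m) = Real.log 2 := by
      rw [hratio, Real.log_mul two_ne_zero h1m.ne']; ring
    have hgineq : Real.log (W t) ≤ Real.log (W m) + M * Real.log 2 := by
      have h0 : Real.log (W t) - M * Real.log (1 - t) ≤
          Real.log (W m) - M * Real.log (1 - m) := hgtm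
      have h1 : M * Real.log (1 - t) - M * Real.log (1 - m) = M * Real.log 2 := by
        rw [← mul_sub, hlog]
      linarith
    have hWbound : W t ≤ W m * Real.exp (M * Real.log 2) := by
      have := Real.exp_le_exp.mpr hgineq
      rwa [Real.exp_log hWt, Real.exp_add, Real.exp_log hWm] at this
    -- combine
    have hA : (1 - t) * F t ≤ M * W t := (hcmp t ht).2
    have hB : W m ≤ (1 - m) * F m := (hcmp m hmIco).1
    have hexp : (0:ℝ) < Real.exp (M * Real.log 2) := Real.exp_pos _
    have hFm : 0 ≤ F m := hFnonneg m hm1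
    have key : (1 - t) * F t ≤ M * Real.exp (M * Real.log 2) * ((1 - m) * F m) := by
      calc (1 - t) * F t ≤ M * W t := hA
        _ ≤ M * (W m * Real.exp (M * Real.log 2)) := by
            exact mul_le_mul_of_nonneg_left hWbound hMpos.le
        _ ≤ M * Real.exp (M * Real.log 2) * ((1 - m) * F m) := by
            nlinarith [mul_le_mul_of_nonneg_left hB (mul_pos hMpos hexp).le]
    show F t ≤ M * Real.exp (M * Real.log 2) * F m
    have h2 : (1 - m) ≤ (1 - t) := by linarith [htm]
    rw [← mul_le_mul_iff_right₀ h1t]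
    calc (1 - t) * F t ≤ M * Real.exp (M * Real.log 2) * ((1 - m) * F m) := key
      _ ≤ (1 - t) * (M * Real.exp (M * Real.log 2) * F m) := by
          nlinarith [mul_le_mul_of_nonneg_right h2
            (mul_nonneg (mul_nonneg hMpos.le hexp.le) hFm)]
end

section
/- If a weight $v \in L^1[0,1]$ is weakly normal of order $\alpha$, then $\alpha > -1$. -/
open MeasureTheory Set
open intervalIntegral ENNReal Filter

/-- The fractional integral `v_x` of order `x ≥ 0` of a weight `v` on `[0,1]`,
with `v_0 = v`. -/
noncomputable def fracInt (v : ℝ → ℝ) (x : ℝ) : ℝ → ℝ :=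
  if x = 0 then v else fun t => ∫ s in t..1, (s - t) ^ (x - 1) / Real.Gamma x * v s

/-- A weight `v` on `[0,1]` is weakly normal of order `α` if for some `x ≥ 0` the function
`(1-t)^(α+x) / v_x(t)` is almost decreasing on some `[t₀,1)`. -/
def WeaklyNormal (v : ℝ → ℝ) (α : ℝ) : Prop :=
  ∃ x ≥ (0:ℝ), ∃ t₀ ∈ Ico (0:ℝ) 1, ∃ C > (0:ℝ),
    ∀ s ∈ Ico t₀ 1, ∀ t ∈ Ico t₀ 1, s ≤ t →
      (1 - t) ^ (α + x) / fracInt v x t ≤ C * ((1 - s) ^ (α + x) / fracInt v x s)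


lemma aux_intervalIntegrable {β a b : ℝ} (hβ : -1 < β) :
    IntervalIntegrable (fun u : ℝ => (b - u) ^ β) volume a b := by
  have h := (intervalIntegral.intervalIntegrable_rpow' (a := 0) (b := b - a) hβ).comp_sub_left b
  simpa using h.symm

lemma aux_eval {β a b : ℝ} (hβ : -1 < β) (hab : a ≤ b) :
    ∫⁻ u in Ioo a b, ENNReal.ofReal ((b - u) ^ β)
      = ENNReal.ofReal ((b - a) ^ (β + 1) / (β + 1)) := by
  have hint : IntegrableOn (fun u : ℝ => (b - u) ^ β) (Ioo a b) volume := by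
    have := (aux_intervalIntegrable (a := a) (b := b) hβ)
    rwa [intervalIntegrable_iff_integrableOn_Ioo_of_le hab] at this
  have hnn : 0 ≤ᵐ[volume.restrict (Ioo a b)] fun u : ℝ => (b - u) ^ β := by
    filter_upwards [ae_restrict_mem measurableSet_Ioo] with u hu
    exact Real.rpow_nonneg (by linarith [hu.2]) _
  rw [← MeasureTheory.ofReal_integral_eq_lintegral_ofReal hint hnn]
  congr 1
  have h1 : ∫ u in Ioo a b, (b - u) ^ β = ∫ u in a..b, (b - u) ^ β := by
    rw [intervalIntegral.integral_of_le hab, MeasureTheory.integral_Ioc_eq_integral_Ioo]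
  rw [h1, intervalIntegral.integral_comp_sub_left (fun w : ℝ => w ^ β) b, sub_self]
  rw [integral_rpow (Or.inl hβ)]
  rw [Real.zero_rpow (by linarith), sub_zero]

lemma aux_top {β t : ℝ} (hβ : β ≤ -1) (ht : t < 1) :
    ∫⁻ u in Ioo t 1, ENNReal.ofReal ((1 - u) ^ β) = ∞ := by
  by_contra hne
  have hmeas : Measurable fun u : ℝ => (1 - u) ^ β := by fun_prop
  have hint : IntegrableOn (fun u : ℝ => (1 - u) ^ β) (Ioo t 1) volume := by
    refine ⟨hmeas.aestronglyMeasurable, ?_⟩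
    rw [hasFiniteIntegral_iff_norm]
    have : ∀ᵐ u ∂(volume.restrict (Ioo t 1)),
        ENNReal.ofReal ‖(1 - u) ^ β‖ = ENNReal.ofReal ((1 - u) ^ β) := by
      filter_upwards [ae_restrict_mem measurableSet_Ioo] with u hu
      rw [Real.norm_of_nonneg (Real.rpow_nonneg (by linarith [hu.2]) _)]
    rw [lintegral_congr_ae this]
    exact lt_top_iff_ne_top.2 hne
  have h2 : IntervalIntegrable (fun u : ℝ => (1 - u) ^ β) volume t 1 := by
    rwa [intervalIntegrable_iff_integrableOn_Ioo_of_le ht.le]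
  have h3 := h2.comp_sub_left 1
  have h4 : IntervalIntegrable (fun w : ℝ => w ^ β) volume 0 (1 - t) := by
    have : (fun x : ℝ => (1 - (1 - x)) ^ β) = fun x : ℝ => x ^ β := by
      funext x; norm_num
    simpa [this] using h3.symm
  have h5 : IntegrableOn (fun w : ℝ => w ^ β) (Ioo 0 (1 - t)) volume := by
    rwa [intervalIntegrable_iff_integrableOn_Ioo_of_le (by linarith)] at h4
  rw [integrableOn_Ioo_rpow_iff (by linarith : (0:ℝ) < 1 - t)] at h5
  linarith

/-- If a weight is weakly normal of order `α`, then `α > -1`. -/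
theorem weaklyNormal_order_gt_neg_one
    (v : ℝ → ℝ) (hv_nonneg : ∀ t ∈ Icc (0:ℝ) 1, 0 ≤ v t)
    (hv_int : IntegrableOn v (Icc (0:ℝ) 1))
    (hv_tail : ∀ t ∈ Ico (0:ℝ) 1, 0 < ∫ x in t..1, v x)
    (α : ℝ) (h : WeaklyNormal v α) : -1 < α := by
  by_contra hcon
  push_neg at hcon
  obtain ⟨x, hx0, t₀, ht₀, C, hC, hmain⟩ := h
  obtain ⟨ht₀0, ht₀1⟩ := ht₀
  rcases eq_or_lt_of_le hx0 with hx | hx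
  · -- case x = 0
    subst hx
    have hfz : fracInt v 0 = v := if_pos rfl
    rw [hfz] at hmain
    simp only [add_zero] at hmain
    by_cases hpos : ∀ t ∈ Ico t₀ 1, 0 < v t
    · have hvt₀ := hpos t₀ ⟨le_refl _, ht₀1⟩
      set D : ℝ := C * ((1 - t₀) ^ α / v t₀) with hD
      have hDpos : 0 < D :=
        mul_pos hC (div_pos (Real.rpow_pos_of_pos (by linarith) _) hvt₀)
      have hlb : ∀ t ∈ Ioo t₀ 1, D⁻¹ * (1 - t) ^ α ≤ v t := by
        intro t ht
        have hvt := hpos t ⟨ht.1.le, ht.2⟩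
        have h1 := hmain t₀ ⟨le_refl _, ht₀1⟩ t ⟨ht.1.le, ht.2⟩ ht.1.le
        rw [div_le_iff₀ hvt] at h1
        rw [inv_mul_le_iff₀ hDpos, hD]
        linarith
      -- finiteness of lintegral of v on Ioo t₀ 1
      have hvint : IntegrableOn v (Ioo t₀ 1) := by
        apply hv_int.mono_set
        intro u hu; exact ⟨by linarith [hu.1], hu.2.le⟩
      have hfin : ∫⁻ u in Ioo t₀ 1, ENNReal.ofReal (v u) < ∞ := by
        have h2 := hvint.hasFiniteIntegral
        rw [hasFiniteIntegral_iff_norm] at h2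
        refine lt_of_le_of_lt (lintegral_mono fun u => ?_) h2
        exact ENNReal.ofReal_le_ofReal (le_abs_self _)
      have hinf : (∞ : ℝ≥0∞) ≤ ∫⁻ u in Ioo t₀ 1, ENNReal.ofReal (v u) := by
        have h3 : ∫⁻ u in Ioo t₀ 1, ENNReal.ofReal (D⁻¹ * (1 - u) ^ α)
            ≤ ∫⁻ u in Ioo t₀ 1, ENNReal.ofReal (v u) := by
          refine lintegral_mono_ae ?_
          filter_upwards [ae_restrict_mem measurableSet_Ioo] with u hu
          exact ENNReal.ofReal_le_ofReal (hlb u hu)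
        have h4 : ∫⁻ u in Ioo t₀ 1, ENNReal.ofReal (D⁻¹ * (1 - u) ^ α)
            = ENNReal.ofReal D⁻¹ * ∫⁻ u in Ioo t₀ 1, ENNReal.ofReal ((1 - u) ^ α) := by
          rw [← lintegral_const_mul _ (by fun_prop)]
          congr 1; funext u
          rw [ENNReal.ofReal_mul (by positivity)]
        rw [h4, aux_top hcon ht₀1, ENNReal.mul_top] at h3
        · exact h3
        · simp only [Ne, ENNReal.ofReal_eq_zero, not_le]; exact inv_pos.mpr hDpos
      exact absurd (lt_of_le_of_lt hinf hfin) (lt_irrefl _)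
    · push_neg at hpos
      obtain ⟨s, hs, hvs⟩ := hpos
      have hvs0 : v s = 0 := le_antisymm hvs (hv_nonneg s ⟨by linarith [hs.1], hs.2.le⟩)
      have hex : ∃ t ∈ Ioo s 1, 0 < v t := by
        by_contra hno
        push_neg at hno
        have hz : EqOn v (fun _ => (0:ℝ)) (Ioo s 1) := by
          intro t ht
          exact le_antisymm (hno t ht) (hv_nonneg t ⟨by linarith [hs.1, ht.1], ht.2.le⟩)
        have hzero : (∫ u in s..1, v u) = 0 := by
          rw [intervalIntegral.integral_of_le hs.2.le,
            MeasureTheory.integral_Ioc_eq_integral_Ioo,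
            MeasureTheory.setIntegral_congr_fun measurableSet_Ioo hz]
          simp
        linarith [hv_tail s ⟨le_trans ht₀0 hs.1, hs.2⟩]
      obtain ⟨t, ht, hvt⟩ := hex
      have h1 := hmain s hs t ⟨le_trans hs.1 ht.1.le, ht.2⟩ ht.1.le
      rw [hvs0, _root_.div_zero, mul_zero] at h1
      have h2 : (0:ℝ) < (1 - t) ^ α / v t :=
        div_pos (Real.rpow_pos_of_pos (by linarith [ht.2]) _) hvt
      linarith
  · -- case 0 < x
    have hΓ : 0 < Real.Gamma x := Real.Gamma_pos_of_pos hx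
    have hxne : x ≠ 0 := ne_of_gt hx
    have hfx : fracInt v x = fun t => ∫ s in t..1, (s - t) ^ (x - 1) / Real.Gamma x * v s :=
      if_neg hxne
    -- measurable nonnegative representative of v
    obtain ⟨g₀, hg₀meas, hg₀⟩ : ∃ g₀ : ℝ → ℝ, StronglyMeasurable g₀ ∧
        v =ᵐ[volume.restrict (Icc 0 1)] g₀ :=
      ⟨hv_int.aestronglyMeasurable.mk v, hv_int.aestronglyMeasurable.stronglyMeasurable_mk,
        hv_int.aestronglyMeasurable.ae_eq_mk⟩
    set g : ℝ → ℝ := fun s => max (g₀ s) 0 with hgdef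
    have hgmeas : Measurable g := hg₀meas.measurable.max measurable_const
    have hgnn : ∀ s, 0 ≤ g s := fun s => le_max_right _ _
    have hvg : v =ᵐ[volume.restrict (Icc 0 1)] g := by
      have h0 : ∀ᵐ s ∂(volume.restrict (Icc (0:ℝ) 1)), 0 ≤ v s := by
        filter_upwards [ae_restrict_mem measurableSet_Icc] with s hs
        exact hv_nonneg s hs
      filter_upwards [hg₀, h0] with s h1 h2
      simp [hgdef, ← h1, max_eq_left h2]
    set φ : ℝ → ℝ≥0∞ := fun s => ENNReal.ofReal (g s) with hφ
    have hφmeas : Measurable φ := hgmeas.ennreal_ofReal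
    have hvg' : ∀ u : ℝ, 0 ≤ u → v =ᵐ[volume.restrict (Ioo u 1)] g := by
      intro u hu
      refine ae_restrict_of_ae_restrict_of_subset ?_ hvg
      intro s hs
      exact ⟨le_trans hu hs.1.le, hs.2.le⟩
    have hgint : IntegrableOn g (Icc (0:ℝ) 1) := hv_int.congr hvg
    have hφfin : ∫⁻ s in Icc (0:ℝ) 1, φ s < ∞ := by
      have h2 := hgint.hasFiniteIntegral
      rw [hasFiniteIntegral_iff_norm] at h2
      refine lt_of_le_of_lt (le_of_eq (lintegral_congr fun s => ?_)) h2
      rw [Real.norm_of_nonneg (hgnn s)]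
    -- tail integrals
    have htail : ∀ t : ℝ, 0 ≤ t → t ≤ 1 →
        ENNReal.ofReal (∫ u in t..1, v u) = ∫⁻ s in Ioo t 1, φ s := by
      intro t ht0 ht1
      have h1 : (∫ u in t..1, v u) = ∫ u in Ioo t 1, g u := by
        rw [intervalIntegral.integral_of_le ht1, MeasureTheory.integral_Ioc_eq_integral_Ioo]
        exact integral_congr_ae (hvg' t ht0)
      rw [h1, MeasureTheory.ofReal_integral_eq_lintegral_ofReal
        (hgint.mono_set fun u hu => ⟨le_trans ht0 hu.1.le, hu.2.le⟩)
        (Eventually.of_forall hgnn)]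
    -- the product kernel
    set f2 : ℝ × ℝ → ℝ≥0∞ := fun p =>
      if p.1 < p.2 ∧ p.2 < 1 then ENNReal.ofReal ((p.2 - p.1) ^ (x - 1)) * φ p.2 else 0
      with hf2
    have hf2meas : Measurable f2 := by
      apply Measurable.ite
      · exact (measurableSet_lt measurable_fst measurable_snd).inter
          (measurableSet_lt measurable_snd measurable_const)
      · apply Measurable.mul (f := fun p : ℝ × ℝ => ENNReal.ofReal ((p.2 - p.1) ^ (x - 1)))
          (g := fun p : ℝ × ℝ => φ p.2)
        · apply Measurable.ennreal_ofReal
          fun_prop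
        · exact hφmeas.comp measurable_snd
      · exact measurable_const
    set Inr : ℝ → ℝ≥0∞ := fun u => ∫⁻ s, f2 (u, s) with hInr
    have hInrmeas : Measurable Inr := hf2meas.lintegral_prod_right'
    have hInreq : ∀ u : ℝ,
        Inr u = ∫⁻ s in Ioo u 1, ENNReal.ofReal ((s - u) ^ (x - 1)) * φ s := by
      intro u
      rw [← lintegral_indicator measurableSet_Ioo]
      apply lintegral_congr
      intro s
      rw [indicator_apply]
      simp only [hf2, mem_Ioo]
    -- Inr is positive on [0,1)
    have hInrpos : ∀ u : ℝ, 0 ≤ u → u < 1 → Inr u ≠ 0 := by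
      intro u hu0 hu1 h0
      rw [hInreq u, lintegral_eq_zero_iff (by fun_prop)] at h0
      have hgz : g =ᵐ[volume.restrict (Ioo u 1)] 0 := by
        filter_upwards [h0, ae_restrict_mem measurableSet_Ioo] with s hs hmem
        have hk : ENNReal.ofReal ((s - u) ^ (x - 1)) ≠ 0 := by
          simp only [Ne, ENNReal.ofReal_eq_zero, not_le]
          exact Real.rpow_pos_of_pos (by linarith [hmem.1]) _
        have hφ0 : φ s = 0 := by
          rcases mul_eq_zero.1 hs with h | h
          · exact absurd h hk
          · exact h
        have := ENNReal.ofReal_eq_zero.1 hφ0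
        exact le_antisymm this (hgnn s)
      have hzero : (∫ w in u..1, v w) = 0 := by
        rw [intervalIntegral.integral_of_le hu1.le,
          MeasureTheory.integral_Ioc_eq_integral_Ioo,
          integral_congr_ae ((hvg' u hu0).trans hgz)]
        simp
      linarith [hv_tail u ⟨hu0, hu1⟩]
    -- fracInt in terms of Inr
    have hfrac : ∀ u : ℝ, 0 ≤ u → u < 1 →
        fracInt v x u = (Real.Gamma x)⁻¹ * (Inr u).toReal := by
      intro u hu0 hu1
      rw [hfx]
      show (∫ s in u..1, (s - u) ^ (x - 1) / Real.Gamma x * v s) = _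
      rw [intervalIntegral.integral_of_le hu1.le, MeasureTheory.integral_Ioc_eq_integral_Ioo]
      have hcongr : ∫ s in Ioo u 1, (s - u) ^ (x - 1) / Real.Gamma x * v s
          = ∫ s in Ioo u 1, (Real.Gamma x)⁻¹ * ((s - u) ^ (x - 1) * g s) := by
        refine integral_congr_ae ?_
        filter_upwards [hvg' u hu0] with s hs
        rw [hs]; ring
      rw [hcongr, MeasureTheory.integral_const_mul]
      congr 1
      have hnn : 0 ≤ᵐ[volume.restrict (Ioo u 1)] fun s => (s - u) ^ (x - 1) * g s := by
        filter_upwards [ae_restrict_mem measurableSet_Ioo] with s hs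
        exact mul_nonneg (Real.rpow_nonneg (by linarith [hs.1]) _) (hgnn s)
      have hmm : Measurable fun s => (s - u) ^ (x - 1) * g s :=
        Measurable.mul (by fun_prop) hgmeas
      rw [MeasureTheory.integral_eq_lintegral_of_nonneg_ae hnn hmm.aestronglyMeasurable]
      congr 1
      rw [hInreq u]
      refine lintegral_congr_ae ?_
      filter_upwards [ae_restrict_mem measurableSet_Ioo] with s hs
      rw [ENNReal.ofReal_mul (Real.rpow_nonneg (by linarith [hs.1]) _)]
    -- Tonelli upper bound
    have hswap : ∀ t : ℝ, t₀ ≤ t → t < 1 →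
        ∫⁻ u in Ioo t 1, Inr u
          ≤ ENNReal.ofReal ((1 - t) ^ x / x) * ∫⁻ s in Ioo t 1, φ s := by
      intro t htt ht1
      have hswap1 : ∫⁻ u in Ioo t 1, Inr u
          = ∫⁻ s, ∫⁻ u in Ioo t 1, f2 (u, s) ∂volume :=
        lintegral_lintegral_swap hf2meas.aemeasurable
      rw [hswap1]
      have hub : ∀ s : ℝ, (∫⁻ u in Ioo t 1, f2 (u, s))
          ≤ (Ioo t 1).indicator (fun s => ENNReal.ofReal ((1 - t) ^ x / x) * φ s) s := by
        intro s
        by_cases hs : t < s ∧ s < 1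
        · rw [indicator_of_mem (by exact ⟨hs.1, hs.2⟩)]
          have hptw : ∀ u : ℝ, f2 (u, s)
              = (Iio s).indicator (fun u => ENNReal.ofReal ((s - u) ^ (x - 1)) * φ s) u := by
            intro u
            rw [indicator_apply]
            simp only [hf2, mem_Iio, hs.2, and_true]
          calc ∫⁻ u in Ioo t 1, f2 (u, s)
              = ∫⁻ u in Ioo t s, ENNReal.ofReal ((s - u) ^ (x - 1)) * φ s := by
                rw [lintegral_congr hptw, lintegral_indicator measurableSet_Iio,
                  Measure.restrict_restrict measurableSet_Iio]
                have hseteq : Iio s ∩ Ioo t 1 = Ioo t s := by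
                  ext u
                  simp only [mem_inter_iff, mem_Iio, mem_Ioo]
                  constructor
                  · rintro ⟨h1, h2, h3⟩; exact ⟨h2, h1⟩
                  · rintro ⟨h1, h2⟩; exact ⟨h2, h1, h2.trans hs.2⟩
                rw [hseteq]
            _ = (∫⁻ u in Ioo t s, ENNReal.ofReal ((s - u) ^ (x - 1))) * φ s :=
                lintegral_mul_const _ (by fun_prop)
            _ = ENNReal.ofReal ((s - t) ^ x / x) * φ s := by
                rw [aux_eval (by linarith : (-1:ℝ) < x - 1) hs.1.le]
                norm_num
            _ ≤ ENNReal.ofReal ((1 - t) ^ x / x) * φ s := by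
                apply mul_le_mul_left
                apply ENNReal.ofReal_le_ofReal
                have hr : (s - t) ^ x ≤ (1 - t) ^ x :=
                  Real.rpow_le_rpow (by linarith [hs.1]) (by linarith [hs.2]) hx0
                exact div_le_div_of_nonneg_right hr hx.le
        · have h0 : ∫⁻ u in Ioo t 1, f2 (u, s) = 0 := by
            have hz : ∀ u ∈ Ioo t 1, f2 (u, s) = (0:ℝ≥0∞) := by
              intro u hu
              simp only [hf2]
              apply if_neg
              rintro ⟨h1, h2⟩
              exact hs ⟨lt_trans hu.1 h1, h2⟩
            rw [setLIntegral_congr_fun (f := fun u => f2 (u, s)) (g := fun _ => (0:ℝ≥0∞))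
              measurableSet_Ioo hz]
            simp
          rw [h0]
          exact bot_le
      calc ∫⁻ s, ∫⁻ u in Ioo t 1, f2 (u, s) ∂volume
          ≤ ∫⁻ s, (Ioo t 1).indicator
              (fun s => ENNReal.ofReal ((1 - t) ^ x / x) * φ s) s ∂volume :=
            lintegral_mono hub
        _ = ∫⁻ s in Ioo t 1, ENNReal.ofReal ((1 - t) ^ x / x) * φ s := by
            rw [lintegral_indicator measurableSet_Ioo]
        _ = ENNReal.ofReal ((1 - t) ^ x / x) * ∫⁻ s in Ioo t 1, φ s :=
            lintegral_const_mul _ hφmeas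
    -- finiteness
    have hφfin' : ∀ t : ℝ, 0 ≤ t → ∫⁻ s in Ioo t 1, φ s < ∞ := by
      intro t ht
      refine lt_of_le_of_lt (lintegral_mono_set ?_) hφfin
      intro u hu
      exact ⟨le_trans ht hu.1.le, hu.2.le⟩
    have hfin0 : ∫⁻ u in Ioo t₀ 1, Inr u < ∞ :=
      lt_of_le_of_lt (hswap t₀ le_rfl ht₀1)
        (ENNReal.mul_lt_top ENNReal.ofReal_lt_top (hφfin' t₀ ht₀0))
    have hae : ∀ᵐ u ∂(volume.restrict (Ioo t₀ 1)), Inr u < ∞ :=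
      ae_lt_top hInrmeas hfin0.ne
    haveI hNB : (ae (volume.restrict (Ioo t₀ 1))).NeBot := by
      rw [ae_neBot, Ne, Measure.restrict_eq_zero]
      rw [Real.volume_Ioo]
      simp only [Ne, ENNReal.ofReal_eq_zero, not_le]
      linarith
    obtain ⟨s₀, hs₀fin, hs₀mem⟩ := (hae.and (ae_restrict_mem measurableSet_Ioo)).exists
    have hs₀0 : 0 ≤ s₀ := le_trans ht₀0 hs₀mem.1.le
    have hfs₀pos : 0 < fracInt v x s₀ := by
      rw [hfrac s₀ hs₀0 hs₀mem.2]
      exact mul_pos (inv_pos.2 hΓ)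
        (ENNReal.toReal_pos (hInrpos s₀ hs₀0 hs₀mem.2) hs₀fin.ne)
    set c1 : ℝ := fracInt v x s₀ / (C * (1 - s₀) ^ (α + x)) with hc1
    have hP : 0 < (1 - s₀) ^ (α + x) := Real.rpow_pos_of_pos (by linarith [hs₀mem.2]) _
    have hc1pos : 0 < c1 := div_pos hfs₀pos (mul_pos hC hP)
    -- a.e. lower bound for Inr beyond s₀
    have hlb : ∀ t : ℝ, s₀ < t → t < 1 →
        (∀ᵐ u ∂(volume.restrict (Ioo t 1)),
          ENNReal.ofReal (Real.Gamma x * c1 * (1 - u) ^ (α + x)) ≤ Inr u) := by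
      intro t hts ht1
      have hsub : Ioo t 1 ⊆ Ioo t₀ 1 := fun u hu =>
        ⟨lt_trans (lt_trans hs₀mem.1 hts) hu.1, hu.2⟩
      filter_upwards [ae_restrict_of_ae_restrict_of_subset hsub hae,
        ae_restrict_mem measurableSet_Ioo] with u hufin humem
      have hu0 : 0 ≤ u := by
        have := humem.1
        linarith [hs₀0]
      have hu1 : u < 1 := humem.2
      have hfpos : 0 < fracInt v x u := by
        rw [hfrac u hu0 hu1]
        exact mul_pos (inv_pos.2 hΓ)
          (ENNReal.toReal_pos (hInrpos u hu0 hu1) hufin.ne)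
      have key := hmain s₀ ⟨hs₀mem.1.le, hs₀mem.2⟩ u
        ⟨by linarith [hs₀mem.1, humem.1], hu1⟩ (by linarith [humem.1])
      rw [div_le_iff₀ hfpos] at key
      have hlb' : c1 * (1 - u) ^ (α + x) ≤ fracInt v x u := by
        have hkey2 : (1 - u) ^ (α + x) * fracInt v x s₀
            ≤ C * (1 - s₀) ^ (α + x) * fracInt v x u := by
          have h5 := mul_le_mul_of_nonneg_right key hfs₀pos.le
          refine h5.trans (le_of_eq ?_)
          field_simp
        rw [hc1, div_mul_eq_mul_div, div_le_iff₀ (mul_pos hC hP)]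
        ring_nf at hkey2 ⊢
        linarith [hkey2]
      have hInru : Inr u = ENNReal.ofReal (Real.Gamma x * fracInt v x u) := by
        rw [hfrac u hu0 hu1, ← mul_assoc, mul_inv_cancel₀ hΓ.ne', one_mul,
          ENNReal.ofReal_toReal hufin.ne]
      rw [hInru]
      apply ENNReal.ofReal_le_ofReal
      rw [mul_assoc]
      exact mul_le_mul_of_nonneg_left hlb' hΓ.le
    -- the exponent α + x must be > -1
    have hαx : -1 < α + x := by
      by_contra hle
      push_neg at hle
      set t := (s₀ + 1) / 2 with htdef
      have hts : s₀ < t := by rw [htdef]; linarith [hs₀mem.2]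
      have ht1 : t < 1 := by rw [htdef]; linarith [hs₀mem.2]
      have h1 := (lintegral_mono_ae (hlb t hts ht1)).trans
        (hswap t (by linarith [hs₀mem.1]) ht1)
      have heq : ∀ u : ℝ, ENNReal.ofReal (Real.Gamma x * c1 * (1 - u) ^ (α + x))
          = ENNReal.ofReal (Real.Gamma x * c1) * ENNReal.ofReal ((1 - u) ^ (α + x)) :=
        fun u => ENNReal.ofReal_mul (by positivity)
      rw [lintegral_congr fun u => heq u, lintegral_const_mul _ (by fun_prop),
        aux_top hle ht1, ENNReal.mul_top (by
          simp only [Ne, ENNReal.ofReal_eq_zero, not_le]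
          positivity)] at h1
      have h2 : (⊤:ℝ≥0∞) < ⊤ := h1.trans_lt
        (ENNReal.mul_lt_top ENNReal.ofReal_lt_top (hφfin' t (by linarith [hs₀0])))
      exact absurd h2 (lt_irrefl _)
    -- the tail is bounded below by a positive constant: contradiction
    set K : ℝ := Real.Gamma x * c1 * x / (α + x + 1) with hK
    have hKpos : 0 < K := by
      rw [hK]
      apply div_pos (by positivity)
      linarith
    have hKle : ∀ t : ℝ, s₀ < t → t < 1 → K ≤ ∫ u in t..1, v u := by
      intro t hts ht1
      have ht0 : (0:ℝ) ≤ t := by linarith [hs₀0]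
      have hTpos : 0 < ∫ u in t..1, v u := hv_tail t ⟨ht0, ht1⟩
      have h1t : (0:ℝ) < 1 - t := by linarith
      have h1 := (lintegral_mono_ae (hlb t hts ht1)).trans
        (hswap t (by linarith [hs₀mem.1]) ht1)
      have heq : ∀ u : ℝ, ENNReal.ofReal (Real.Gamma x * c1 * (1 - u) ^ (α + x))
          = ENNReal.ofReal (Real.Gamma x * c1) * ENNReal.ofReal ((1 - u) ^ (α + x)) :=
        fun u => ENNReal.ofReal_mul (by positivity)
      rw [lintegral_congr fun u => heq u, lintegral_const_mul _ (by fun_prop),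
        aux_eval hαx ht1.le, ← htail t ht0 ht1.le,
        ← ENNReal.ofReal_mul (by positivity),
        ← ENNReal.ofReal_mul (by positivity)] at h1
      have h2 := (ENNReal.ofReal_le_ofReal_iff
        (mul_nonneg (by positivity) hTpos.le)).1 h1
      -- h2 : Γ x * c1 * ((1-t)^(α+x+1)/(α+x+1)) ≤ (1-t)^x/x * tail
      have hQ : (0:ℝ) < (1 - t) ^ x := Real.rpow_pos_of_pos h1t _
      have hR : (1:ℝ) ≤ (1 - t) ^ (α + 1) := by
        have := Real.rpow_le_rpow_of_exponent_ge h1t (by linarith) (by linarith : α + 1 ≤ 0)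
        rwa [Real.rpow_zero] at this
      have hQR : (1 - t) ^ (α + x + 1) = (1 - t) ^ x * (1 - t) ^ (α + 1) := by
        rw [← Real.rpow_add h1t]
        congr 1
        ring
      have hS : (0:ℝ) < α + x + 1 := by linarith
      have h3 := mul_le_mul_of_nonneg_left h2
        (le_of_lt (by positivity : (0:ℝ) < x / (1 - t) ^ x))
      have e1 : x / (1 - t) ^ x * (Real.Gamma x * c1 * ((1 - t) ^ (α + x + 1) / (α + x + 1)))
          = Real.Gamma x * c1 * x * (1 - t) ^ (α + 1) / (α + x + 1) := by
        rw [hQR]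
        field_simp
      have e2 : x / (1 - t) ^ x * ((1 - t) ^ x / x * ∫ u in t..1, v u)
          = ∫ u in t..1, v u := by
        field_simp
      rw [e1, e2] at h3
      have h4 : K ≤ Real.Gamma x * c1 * x * (1 - t) ^ (α + 1) / (α + x + 1) := by
        rw [hK]
        exact div_le_div_of_nonneg_right
          (le_mul_of_one_le_right (by positivity) hR) hS.le
      exact h4.trans h3
    -- continuity of the tail integral at 1
    have hcont : ContinuousOn (fun t => ∫ u in t..1, v u) (Icc (0:ℝ) 1) := by
      have huicc : uIcc (0:ℝ) 1 = Icc 0 1 := uIcc_of_le zero_le_one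
      have h5 := intervalIntegral.continuousOn_primitive_interval_left
        (f := v) (μ := volume) (a := 0) (b := 1) (by rwa [huicc])
      rwa [huicc] at h5
    have htend : Tendsto (fun t => ∫ u in t..1, v u) (nhdsWithin 1 (Icc 0 1)) (nhds 0) := by
      have h5 := hcont 1 (right_mem_Icc.2 zero_le_one)
      simpa [ContinuousWithinAt, intervalIntegral.integral_same] using h5
    have htend2 : Tendsto (fun t => ∫ u in t..1, v u)
        (nhdsWithin 1 (Ico 0 1)) (nhds 0) :=
      htend.mono_left (nhdsWithin_mono 1 Ico_subset_Icc_self)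
    haveI : (nhdsWithin (1:ℝ) (Ico 0 1)).NeBot := by
      apply mem_closure_iff_nhdsWithin_neBot.1
      rw [closure_Ico (by norm_num : (0:ℝ) ≠ 1)]
      exact right_mem_Icc.2 zero_le_one
    have hev1 : ∀ᶠ t in nhdsWithin (1:ℝ) (Ico 0 1), (∫ u in t..1, v u) < K :=
      htend2.eventually_lt_const hKpos
    have hev2 : ∀ᶠ t in nhdsWithin (1:ℝ) (Ico 0 1), s₀ < t :=
      eventually_nhdsWithin_of_eventually_nhds (eventually_gt_nhds hs₀mem.2)
    have hev3 : ∀ᶠ t in nhdsWithin (1:ℝ) (Ico 0 1), t ∈ Ico (0:ℝ) 1 :=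
      eventually_mem_nhdsWithin
    obtain ⟨t, h5, h6, h7⟩ := (hev1.and (hev2.and hev3)).exists
    exact absurd (hKle t h6 h7.2) (not_le.2 h5)
end

section
/- Let $\mu$ be a probability measure on $[0,1]$ with $\mu((0,1]) > 0$. Then there exist real numbers $c_n \ge 0$, $n \ge 1$, such that for all complex $z$ with $|z| < 1$, $\int_{[0,1]} \frac{1}{1 - tz}\,d\mu(t) = \frac{1}{1 - \sum_{n=1}^\infty c_n z^n}$. -/
open MeasureTheory Set ENNReal NNReal

noncomputable def kaluzaC (F : ℕ → ℝ) : ℕ → ℝ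
  | 0 => 0
  | n+1 => F (n+1) - ∑ k ∈ (Finset.range (n+1)).attach,
      kaluzaC F k.1 * F (n+1-k.1)
decreasing_by have := k.2; simp only [Finset.mem_range] at this; omega

lemma kaluzaC_succ (F : ℕ → ℝ) (n : ℕ) :
    kaluzaC F (n+1) = F (n+1) - ∑ k ∈ Finset.range (n+1), kaluzaC F k * F (n+1-k) := by
  rw [kaluzaC]
  congr 1
  exact Finset.sum_attach (Finset.range (n+1)) (fun k => kaluzaC F k * F (n+1-k))

lemma ratio_mono {F : ℕ → ℝ} (hFpos : ∀ n, 0 < F n)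
    (hlc : ∀ n, F (n+1)^2 ≤ F n * F (n+2)) : Monotone (fun n => F (n+1) / F n) := by
  apply monotone_nat_of_le_succ
  intro n
  rw [div_le_div_iff₀ (hFpos n) (hFpos (n+1))]
  nlinarith [hlc n, hFpos n, hFpos (n+1), hFpos (n+2)]

lemma kaluza_identity {F : ℕ → ℝ} (hF0 : F 0 = 1) (n : ℕ) :
    ∑ k ∈ Finset.range (n+2), kaluzaC F k * F (n+1-k) = F (n+1) := by
  rw [Finset.sum_range_succ, kaluzaC_succ]
  simp [hF0]

lemma kaluza_nonneg {F : ℕ → ℝ} (hF0 : F 0 = 1) (hFpos : ∀ n, 0 < F n)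
    (hlc : ∀ n, F (n+1)^2 ≤ F n * F (n+2)) : ∀ n, 0 ≤ kaluzaC F n := by
  intro n
  induction n using Nat.strong_induction_on with
  | _ n ih =>
    match n with
    | 0 => simp [kaluzaC]
    | 1 =>
      rw [kaluzaC_succ]
      simp [kaluzaC]
      exact (hFpos 1).le
    | (m+2) =>
      have key : ∑ k ∈ Finset.range (m+2), kaluzaC F k * F (m+2-k)
          ≤ (F (m+2) / F (m+1)) * ∑ k ∈ Finset.range (m+2), kaluzaC F k * F (m+1-k) := by
        rw [Finset.mul_sum]
        apply Finset.sum_le_sum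
        intro k hk
        have hk' : k < m+2 := Finset.mem_range.mp hk
        have hck : 0 ≤ kaluzaC F k := ih k (by omega)
        have hr : F (m+1-k+1) / F (m+1-k) ≤ F (m+2) / F (m+1) :=
          ratio_mono hFpos hlc (by omega : m+1-k ≤ m+1)
        have he : F (m+2-k) = F (m+1-k+1) := by congr 1; omega
        have hbound : F (m+2-k) ≤ F (m+2) / F (m+1) * F (m+1-k) := by
          rw [he, ← div_le_iff₀ (hFpos (m+1-k))]
          exact hr
        nlinarith [mul_le_mul_of_nonneg_left hbound hck]
      rw [kaluza_identity hF0 m] at key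
      have hcanc : F (m+2) / F (m+1) * F (m+1) = F (m+2) :=
        div_mul_cancel₀ _ (hFpos (m+1)).ne'
      rw [hcanc] at key
      have := kaluzaC_succ F (m+1)
      show 0 ≤ kaluzaC F (m+1+1)
      rw [this]
      linarith

lemma kaluza_partial_sum_le {F : ℕ → ℝ} (hF0 : F 0 = 1) (hFpos : ∀ n, 0 < F n)
    (hlc : ∀ n, F (n+1)^2 ≤ F n * F (n+2)) (hanti : ∀ m n : ℕ, m ≤ n → F n ≤ F m)
    (n : ℕ) : ∑ k ∈ Finset.range n, kaluzaC F k ≤ 1 := by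
  have key : ∀ m : ℕ, ∑ k ∈ Finset.range (m+2), kaluzaC F k ≤ 1 := by
    intro m
    have hid := kaluza_identity hF0 m
    have hlow : F (m+1) * ∑ k ∈ Finset.range (m+2), kaluzaC F k
        ≤ ∑ k ∈ Finset.range (m+2), kaluzaC F k * F (m+1-k) := by
      rw [Finset.mul_sum]
      apply Finset.sum_le_sum
      intro k hk
      have hck := kaluza_nonneg hF0 hFpos hlc k
      have : F (m+1) ≤ F (m+1-k) := hanti _ _ (by omega)
      nlinarith
    rw [hid] at hlow
    have := hFpos (m+1)
    nlinarith
  rcases n with _ | _ | m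
  · simp
  · simp [kaluzaC]
  · calc ∑ k ∈ Finset.range (m+2), kaluzaC F k ≤ 1 := key m

private lemma integral_step (μ : Measure ℝ) [IsProbabilityMeasure μ] (hmeas : μ (Icc (0:ℝ) 1) = 1)
    (F : ℕ → ℝ) (hFdef : F = fun n => ∫ t in Icc (0:ℝ) 1, t^n ∂μ)
    (z : ℂ) (hz : ‖z‖ < 1) :
    (∫ t in Icc (0:ℝ) 1, (1 - (t:ℂ) * z)⁻¹ ∂μ) = ∑' n : ℕ, (F n : ℂ) * z ^ n := by
  have hz' : ∀ t ∈ Icc (0:ℝ) 1, ‖(t:ℂ) * z‖ < 1 := by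
    intro t ht
    rw [norm_mul, Complex.norm_real]
    calc ‖t‖ * ‖z‖ ≤ 1 * ‖z‖ := by
          apply mul_le_mul_of_nonneg_right _ (norm_nonneg z)
          rw [Real.norm_eq_abs, abs_of_nonneg ht.1]; exact ht.2
      _ = ‖z‖ := one_mul _
      _ < 1 := hz
  have hcongr : ∫ t in Icc (0:ℝ) 1, (1 - (t:ℂ) * z)⁻¹ ∂μ
      = ∫ t in Icc (0:ℝ) 1, (∑' n : ℕ, (t:ℂ)^n * z^n) ∂μ := by
    apply setIntegral_congr_fun measurableSet_Icc
    intro t ht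
    simp only
    rw [← tsum_geometric_of_norm_lt_one (hz' t ht)]
    exact tsum_congr fun n => (mul_pow _ _ _)
  have hswap : ∫ t in Icc (0:ℝ) 1, (∑' n : ℕ, (t:ℂ)^n * z^n) ∂μ
      = ∑' n : ℕ, ∫ t in Icc (0:ℝ) 1, (t:ℂ)^n * z^n ∂μ := by
    apply integral_tsum
    · exact fun n => ((Complex.continuous_ofReal.pow n).mul continuous_const).aestronglyMeasurable
    · have hb : ∀ n : ℕ, ∫⁻ t in Icc (0:ℝ) 1, ‖(t:ℂ)^n * z^n‖₊ ∂μ ≤ (‖z‖₊ : ℝ≥0∞)^n := by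
        intro n
        have : ∀ t ∈ Icc (0:ℝ) 1, (‖(t:ℂ)^n * z^n‖₊ : ℝ≥0∞) ≤ (‖z‖₊^n : ℝ≥0) := by
          intro t ht
          rw [ENNReal.coe_le_coe, ← NNReal.coe_le_coe, coe_nnnorm, NNReal.coe_pow, coe_nnnorm]
          rw [norm_mul, norm_pow, norm_pow, Complex.norm_real, Real.norm_eq_abs,
            abs_of_nonneg ht.1]
          calc t^n * ‖z‖^n ≤ 1 * ‖z‖^n := by
                apply mul_le_mul_of_nonneg_right _ (pow_nonneg (norm_nonneg z) n)
                exact pow_le_one₀ ht.1 ht.2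
            _ = ‖z‖^n := one_mul _
        calc ∫⁻ t in Icc (0:ℝ) 1, ‖(t:ℂ)^n * z^n‖₊ ∂μ
            ≤ ∫⁻ _ in Icc (0:ℝ) 1, ((‖z‖₊^n : ℝ≥0) : ℝ≥0∞) ∂μ := by
              apply setLIntegral_mono measurable_const
              exact fun t ht => this t ht
          _ = (‖z‖₊^n : ℝ≥0) * μ (Icc (0:ℝ) 1) := by
              rw [setLIntegral_const]
          _ = (‖z‖₊ : ℝ≥0∞)^n := by rw [hmeas, mul_one, ENNReal.coe_pow]
      have hg : ∑' n : ℕ, ((‖z‖₊ : ℝ≥0∞))^n ≠ ⊤ := by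
        rw [ENNReal.tsum_geometric]
        apply ENNReal.inv_ne_top.mpr
        rw [ne_eq, tsub_eq_zero_iff_le, ← ENNReal.coe_one, ENNReal.coe_le_coe, ← NNReal.coe_le_coe]
        simp only [coe_nnnorm, NNReal.coe_one]
        exact not_le.mpr hz
      exact ne_top_of_le_ne_top hg (ENNReal.tsum_le_tsum hb)
  rw [hcongr, hswap]
  apply tsum_congr
  intro n
  have : ∀ t : ℝ, (t:ℂ)^n * z^n = ((t^n : ℝ) : ℂ) * z^n := by intro t; push_cast; ring
  simp_rw [this]
  rw [integral_mul_const, hFdef]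
  congr 1
  have := integral_ofReal (𝕜 := ℂ) (μ := μ.restrict (Icc (0:ℝ) 1)) (f := fun a : ℝ => a^n)
  simpa using this

set_option maxHeartbeats 1000000 in
private lemma series_step (F c : ℕ → ℝ) (hF0 : F 0 = 1) (hFpos : ∀ n, 0 < F n) (hF1 : ∀ n, F n ≤ 1)
    (hc0 : c 0 = 0) (hcnn : ∀ n, 0 ≤ c n) (hc1 : ∀ n, c n ≤ 1)
    (hid : ∀ n : ℕ, ∑ k ∈ Finset.range (n+2), c k * F (n+1-k) = F (n+1))
    (z : ℂ) (hz : ‖z‖ < 1) :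
    Summable (fun n : ℕ => (c (n+1) : ℂ) * z ^ (n+1)) ∧
    (∑' n : ℕ, (F n : ℂ) * z ^ n) = (1 - ∑' n : ℕ, (c (n+1) : ℂ) * z ^ (n+1))⁻¹ := by
  have hgeo : Summable (fun n : ℕ => ‖z‖^n) := summable_geometric_of_lt_one (norm_nonneg z) hz
  have hbnd : ∀ (g : ℕ → ℝ), (∀ n, 0 ≤ g n) → (∀ n, g n ≤ 1) →
      (∀ n, ‖((g n : ℂ) * z ^ n)‖ ≤ ‖z‖^n) := by
    intro g h0 h1 n
    rw [norm_mul, norm_pow, Complex.norm_real, Real.norm_eq_abs, abs_of_nonneg (h0 n)]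
    calc g n * ‖z‖^n ≤ 1 * ‖z‖^n :=
          mul_le_mul_of_nonneg_right (h1 n) (pow_nonneg (norm_nonneg z) n)
      _ = ‖z‖^n := one_mul _
  have hFnorm : Summable (fun n : ℕ => ‖(F n : ℂ) * z ^ n‖) :=
    Summable.of_nonneg_of_le (fun n => norm_nonneg _) (hbnd F (fun n => (hFpos n).le) hF1) hgeo
  have hcnorm : Summable (fun n : ℕ => ‖(c n : ℂ) * z ^ n‖) :=
    Summable.of_nonneg_of_le (fun n => norm_nonneg _) (hbnd c hcnn hc1) hgeo
  have hA : Summable (fun n : ℕ => (F n : ℂ) * z ^ n) := hFnorm.of_norm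
  have hB : Summable (fun n : ℕ => (c n : ℂ) * z ^ n) := hcnorm.of_norm
  have hBshift : Summable (fun n : ℕ => (c (n+1) : ℂ) * z ^ (n+1)) :=
    (_root_.summable_nat_add_iff 1).mpr hB
  refine ⟨hBshift, ?_⟩
  set A := ∑' n : ℕ, (F n : ℂ) * z ^ n with hAdef
  set S := ∑' n : ℕ, (c (n+1) : ℂ) * z ^ (n+1) with hSdef
  have hT : (∑' n : ℕ, (c n : ℂ) * z ^ n) = S := by
    rw [Summable.tsum_eq_zero_add hB]
    simp [hc0, hSdef]
  have hprod : A * S = ∑' n : ℕ,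
      ∑ k ∈ Finset.range (n+1), ((F k : ℂ) * z ^ k) * ((c (n-k) : ℂ) * z ^ (n-k)) := by
    rw [← hT]
    exact tsum_mul_tsum_eq_tsum_sum_range_of_summable_norm hFnorm hcnorm
  have hinner : ∀ n : ℕ, ∑ k ∈ Finset.range (n+1), ((F k : ℂ) * z ^ k) * ((c (n-k) : ℂ) * z ^ (n-k))
      = ((∑ k ∈ Finset.range (n+1), c k * F (n-k) : ℝ) : ℂ) * z ^ n := by
    intro n
    have hrefl : ∑ k ∈ Finset.range (n+1), c k * F (n-k)
        = ∑ k ∈ Finset.range (n+1), F k * c (n-k) := by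
      rw [← Finset.sum_range_reflect (fun k => F k * c (n-k)) (n+1)]
      apply Finset.sum_congr rfl
      intro j hj
      have hjn := Finset.mem_range.mp hj
      have h1 : n + 1 - 1 - j = n - j := by omega
      have h2 : n - (n - j) = j := by omega
      rw [h1, h2, mul_comm]
    rw [hrefl]
    push_cast
    rw [Finset.sum_mul]
    apply Finset.sum_congr rfl
    intro k hk
    have hkn := Finset.mem_range.mp hk
    have hzz : z ^ k * z ^ (n-k) = z ^ n := by
      rw [← pow_add]
      congr 1
      omega
    calc ((F k : ℂ) * z ^ k) * ((c (n-k) : ℂ) * z ^ (n-k))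
        = (F k : ℂ) * (c (n-k) : ℂ) * (z ^ k * z ^ (n-k)) := by ring
      _ = (F k : ℂ) * (c (n-k) : ℂ) * z ^ n := by rw [hzz]
  have hval : ∀ n : ℕ, ((∑ k ∈ Finset.range (n+1), c k * F (n-k) : ℝ) : ℂ) * z ^ n
      = (if n = 0 then 0 else (F n : ℂ) * z ^ n) := by
    intro n
    rcases n with _ | m
    · simp [hc0]
    · rw [if_neg (Nat.succ_ne_zero m)]
      congr 2
      exact_mod_cast hid m
  have hAS : A * S = A - 1 := by
    rw [hprod]
    simp_rw [hinner, hval]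
    have hsplit : ∑' n : ℕ, (if n = 0 then 0 else (F n : ℂ) * z ^ n)
        = ∑' n : ℕ, (F (n+1) : ℂ) * z ^ (n+1) := by
      rw [Summable.tsum_eq_zero_add]
      · simp
      · apply Summable.of_norm
        apply Summable.of_nonneg_of_le (fun n => norm_nonneg _) _ hgeo
        intro n
        rcases n with _ | m
        · simp
        · simp only [if_neg (Nat.succ_ne_zero m)]
          exact hbnd F (fun k => (hFpos k).le) hF1 (m+1)
    rw [hsplit]
    have hAsplit : A = 1 + ∑' n : ℕ, (F (n+1) : ℂ) * z ^ (n+1) := by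
      rw [hAdef, Summable.tsum_eq_zero_add hA]
      simp [hF0]
    rw [hAsplit]
    ring
  have hmul : A * (1 - S) = 1 := by rw [mul_sub, hAS]; ring
  exact eq_inv_of_mul_eq_one_left hmul


/-- For a probability measure `μ` on `[0,1]` with `μ((0,1]) > 0`, there are coefficients
`cₙ ≥ 0` such that `∫ (1 - t z)⁻¹ dμ(t) = (1 - ∑_{n≥1} cₙ zⁿ)⁻¹` for `|z| < 1`. -/
theorem cauchy_transform_is_pick_kernel
    (μ : Measure ℝ) [IsProbabilityMeasure μ] (hμ : μ (Icc (0:ℝ) 1)ᶜ = 0)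
    (hpos : 0 < μ (Ioc (0:ℝ) 1)) :
    ∃ c : ℕ → ℝ, (∀ n, 0 ≤ c n) ∧
      ∀ z : ℂ, ‖z‖ < 1 →
        Summable (fun n : ℕ => (c (n+1) : ℂ) * z ^ (n+1)) ∧
        (∫ t in Icc (0:ℝ) 1, (1 - (t:ℂ) * z)⁻¹ ∂μ)
          = (1 - ∑' n : ℕ, (c (n+1) : ℂ) * z ^ (n+1))⁻¹ := by
  set F : ℕ → ℝ := fun n => ∫ t in Icc (0:ℝ) 1, t^n ∂μ with hFdef
  have hmeas : μ (Icc (0:ℝ) 1) = 1 := by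
    have h := measure_add_measure_compl (μ := μ) (measurableSet_Icc (a := (0:ℝ)) (b := 1))
    rw [hμ, add_zero, measure_univ] at h
    exact h
  have hint : ∀ n : ℕ, IntegrableOn (fun t : ℝ => t^n) (Icc 0 1) μ :=
    fun n => (continuous_pow n).continuousOn.integrableOn_compact isCompact_Icc
  have hF0 : F 0 = 1 := by
    simp [hFdef, measureReal_def, hmeas]
  have hanti : ∀ m n : ℕ, m ≤ n → F n ≤ F m := by
    intro m n hmn
    exact setIntegral_mono_on (hint n) (hint m) measurableSet_Icc
      (fun t ht => pow_le_pow_of_le_one ht.1 ht.2 hmn)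
  have hFpos : ∀ n, 0 < F n := by
    intro n
    have hnn : 0 ≤ᵐ[μ.restrict (Ioc (0:ℝ) 1)] fun t : ℝ => t^n :=
      (ae_restrict_iff' measurableSet_Ioc).2 (ae_of_all _ fun t ht => pow_nonneg ht.1.le n)
    have hintI : IntegrableOn (fun t : ℝ => t^n) (Ioc 0 1) μ :=
      (hint n).mono_set Ioc_subset_Icc_self
    have hlt : 0 < ∫ t in Ioc (0:ℝ) 1, t^n ∂μ := by
      rw [setIntegral_pos_iff_support_of_nonneg_ae hnn hintI]
      have hsub : Ioc (0:ℝ) 1 ⊆ Function.support fun t : ℝ => t^n := by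
        intro t ht
        exact pow_ne_zero n (ne_of_gt ht.1)
      rw [inter_eq_right.mpr hsub]
      exact hpos
    have hle : ∫ t in Ioc (0:ℝ) 1, t^n ∂μ ≤ F n := by
      apply setIntegral_mono_set (hint n)
      · exact (ae_restrict_iff' measurableSet_Icc).2
          (ae_of_all _ fun t ht => pow_nonneg ht.1 n)
      · exact HasSubset.Subset.eventuallyLE Ioc_subset_Icc_self
    linarith
  have hkey : ∀ (n : ℕ) (l : ℝ), 0 ≤ F (n+2) - 2*l*F (n+1) + l^2 * F n := by
    intro n l
    have heq : ∫ t in Icc (0:ℝ) 1, (t^(n+2) - 2*l*t^(n+1) + l^2*t^n) ∂μ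
        = F (n+2) - 2*l*F (n+1) + l^2 * F n := by
      have e1 : ∫ t in Icc (0:ℝ) 1, (t^(n+2) - 2*l*t^(n+1) + l^2*t^n) ∂μ
          = (∫ t in Icc (0:ℝ) 1, (t^(n+2) - 2*l*t^(n+1)) ∂μ)
            + ∫ t in Icc (0:ℝ) 1, l^2*t^n ∂μ :=
        integral_add ((hint (n+2)).sub ((hint (n+1)).const_mul _)) ((hint n).const_mul _)
      have e2 : ∫ t in Icc (0:ℝ) 1, (t^(n+2) - 2*l*t^(n+1)) ∂μ
          = (∫ t in Icc (0:ℝ) 1, t^(n+2) ∂μ) - ∫ t in Icc (0:ℝ) 1, 2*l*t^(n+1) ∂μ :=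
        integral_sub (hint (n+2)) ((hint (n+1)).const_mul _)
      have e3 : ∫ t in Icc (0:ℝ) 1, 2*l*t^(n+1) ∂μ = 2*l* ∫ t in Icc (0:ℝ) 1, t^(n+1) ∂μ :=
        integral_const_mul _ _
      have e4 : ∫ t in Icc (0:ℝ) 1, l^2*t^n ∂μ = l^2 * ∫ t in Icc (0:ℝ) 1, t^n ∂μ :=
        integral_const_mul _ _
      rw [e1, e2, e3, e4]
    rw [← heq]
    apply setIntegral_nonneg measurableSet_Icc
    intro t ht
    have h : t^(n+2) - 2*l*t^(n+1) + l^2*t^n = t^n * (t - l)^2 := by ring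
    rw [h]
    exact mul_nonneg (pow_nonneg ht.1 n) (sq_nonneg _)
  have hlc : ∀ n, F (n+1)^2 ≤ F n * F (n+2) := by
    intro n
    have h := hkey n (F (n+1) / F n)
    have ha := hFpos n
    have hba : F (n+1) / F n * F n = F (n+1) := div_mul_cancel₀ _ ha.ne'
    nlinarith [mul_nonneg h ha.le, hba, sq_nonneg (F (n+1) / F n)]
  set c : ℕ → ℝ := kaluzaC F with hcdef
  have hcnn : ∀ n, 0 ≤ c n := kaluza_nonneg hF0 hFpos hlc
  have hc0 : c 0 = 0 := by simp [hcdef, kaluzaC]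
  have hc1 : ∀ n, c n ≤ 1 := by
    intro n
    calc c n ≤ ∑ k ∈ Finset.range (n+1), c k :=
          Finset.single_le_sum (fun k _ => hcnn k) (Finset.self_mem_range_succ n)
      _ ≤ 1 := kaluza_partial_sum_le hF0 hFpos hlc hanti (n+1)
  have hF1 : ∀ n, F n ≤ 1 := by
    intro n
    have := hanti 0 n (Nat.zero_le n)
    rw [hF0] at this
    exact this
  refine ⟨c, hcnn, ?_⟩
  intro z hz
  obtain ⟨hsum, heq⟩ := series_step F c hF0 hFpos hF1 hc0 hcnn hc1
    (kaluza_identity hF0) z hz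
  exact ⟨hsum, by rw [integral_step μ hmeas F hFdef z hz, heq]⟩
end

section
/- Kaluza's lemma: Let $(a_n)_{n \ge 0}$ be a sequence with $a_0 = 1$, $a_n > 0$ for all $n$, and such that the ratios $a_{n+1}/a_n$ are nondecreasing, with the power series $f(z) = \sum_{n \ge 0} a_n z^n$ having positive radius of convergence. Then writing $1/f(z) = 1 - \sum_{n \ge 1} b_n z^n$, all coefficients $b_n$ are nonnegative. -/
open Finset

/-- Kaluza's lemma: if `a₀ = 1`, `aₙ > 0`, the ratios `a_{n+1}/aₙ` are nondecreasing, and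
`∑ aₙ zⁿ` has positive radius of convergence, then the coefficients `bₙ` (for `n ≥ 1`) of the
reciprocal power series `1/f(z) = 1 - ∑_{n≥1} bₙ zⁿ` are all nonnegative. Here the `bₙ` are
characterized by the convolution identity `aₙ = ∑_{k=1}^n b_k a_{n-k}` for `n ≥ 1`. -/
theorem kaluza_lemma
    (a : ℕ → ℝ) (ha0 : a 0 = 1) (hpos : ∀ n, 0 < a n)
    (hratio : ∀ n : ℕ, a (n+1) / a n ≤ a (n+2) / a (n+1))
    (hradius : ∃ r : ℝ, 0 < r ∧ Summable (fun n : ℕ => a n * r ^ n))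
    (b : ℕ → ℝ)
    (hb : ∀ n : ℕ, 1 ≤ n → a n = ∑ k ∈ Finset.Icc 1 n, b k * a (n - k)) :
    ∀ n : ℕ, 1 ≤ n → 0 ≤ b n := by
  have hmono : Monotone (fun n => a (n+1) / a n) :=
    monotone_nat_of_le_succ hratio
  intro n
  induction n using Nat.strong_induction_on with
  | _ n ih =>
    intro hn
    match n, hn with
    | 1, _ =>
      have h1 := hb 1 le_rfl
      simp [ha0] at h1
      have := hpos 1
      linarith
    | m+2, _ =>
      have h2 := hb (m+2) (by omega)
      rw [Finset.sum_Icc_succ_top (by omega : 1 ≤ m+2)] at h2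
      simp only [Nat.sub_self, ha0, mul_one] at h2
      have h1 := hb (m+1) (by omega)
      set r := a (m+2) / a (m+1) with hr
      have hkey : ∀ k ∈ Finset.Icc 1 (m+1), b k * a (m+2-k) ≤ r * (b k * a (m+1-k)) := by
        intro k hk
        simp only [Finset.mem_Icc] at hk
        have hbk : 0 ≤ b k := ih k (by omega) hk.1
        have hsub : m+2-k = (m+1-k)+1 := by omega
        have hle : a ((m+1-k)+1) / a (m+1-k) ≤ r := hmono (by omega : m+1-k ≤ m+1)
        have hp := hpos (m+1-k)
        have hle' : a ((m+1-k)+1) ≤ r * a (m+1-k) := by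
          rw [div_le_iff₀ hp] at hle; linarith
        rw [hsub]
        calc b k * a ((m+1-k)+1) ≤ b k * (r * a (m+1-k)) :=
              mul_le_mul_of_nonneg_left hle' hbk
          _ = r * (b k * a (m+1-k)) := by ring
      have hS : ∑ k ∈ Finset.Icc 1 (m+1), b k * a (m+2-k) ≤ r * a (m+1) := by
        calc _ ≤ ∑ k ∈ Finset.Icc 1 (m+1), r * (b k * a (m+1-k)) :=
              Finset.sum_le_sum hkey
          _ = r * ∑ k ∈ Finset.Icc 1 (m+1), b k * a (m+1-k) := by
              rw [Finset.mul_sum]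
          _ = r * a (m+1) := by rw [← h1]
      have hra : r * a (m+1) = a (m+2) := div_mul_cancel₀ _ (hpos (m+1)).ne'
      linarith
end
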